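/- Fix a reference orientation O₀ of M. Then for all orientations O, O' of M, O and O' are circuit–cocircuit-reversal equivalent if and only if (O − O')/2 ∈ Λ_A + Λ*_A; moreover, for every γ ∈ ℤ^E there exists an orientation O with (O − O₀)/2 − γ ∈ Λ_A + Λ*_A. Consequently, the map O ↦ class of (O − O₀)/2 induces a bijection from the set of circuit–cocircuit reversal classes of orientations of M onto the Jacobian group Jac(M) = ℤ^E/(Λ_A + Λ*_A); in other words, the circuit–cocircuit reversal system is a torsor under Jac(M). -/

import Mathlib

open Matrix
set_option linter.unusedSectionVars false
set_option maxHeartbeats 1000000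

/-- A vector with all entries in `{-1,0,1}`. -/
def SignVec {m : ℕ} (C : Fin m → ℤ) : Prop := ∀ e, C e = -1 ∨ C e = 0 ∨ C e = 1

/-- A signed circuit of `A`: a `{-1,0,1}`-vector in `ker A` with nonempty support that is
minimal among supports of nonzero kernel vectors. -/
def IsCircuit {r m : ℕ} (A : Matrix (Fin r) (Fin m) ℤ) (C : Fin m → ℤ) : Prop :=
  SignVec C ∧ C ≠ 0 ∧ A.mulVec C = 0 ∧
    ∀ v : Fin m → ℤ, v ≠ 0 → A.mulVec v = 0 →
      {e | v e ≠ 0} ⊆ {e | C e ≠ 0} → {e | v e ≠ 0} = {e | C e ≠ 0}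

/-- A signed cocircuit of `A`: a `{-1,0,1}`-vector in the row space of `A` with nonempty
support that is minimal among supports of nonzero row-space vectors. -/
def IsCocircuit {r m : ℕ} (A : Matrix (Fin r) (Fin m) ℤ) (D : Fin m → ℤ) : Prop :=
  SignVec D ∧ D ≠ 0 ∧ (∃ y : Fin r → ℤ, D = Matrix.vecMul y A) ∧
    ∀ v : Fin m → ℤ, v ≠ 0 → (∃ y : Fin r → ℤ, v = Matrix.vecMul y A) →
      {e | v e ≠ 0} ⊆ {e | D e ≠ 0} → {e | v e ≠ 0} = {e | D e ≠ 0}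

/-- An orientation of the matroid: a function `E → {-1,1}`. -/
def IsOrientation {m : ℕ} (O : Fin m → ℤ) : Prop := ∀ e, O e = 1 ∨ O e = -1

/-- One circuit or cocircuit reversal: negate `O` on the support of a signed circuit or
signed cocircuit compatible with `O`. -/
def CCReversal {r m : ℕ} (A : Matrix (Fin r) (Fin m) ℤ) (O O' : Fin m → ℤ) : Prop :=
  ∃ C : Fin m → ℤ, (IsCircuit A C ∨ IsCocircuit A C) ∧ (∀ e, C e ≠ 0 → O e = C e) ∧
    (∀ e, C e ≠ 0 → O' e = -O e) ∧ (∀ e, C e = 0 → O' e = O e)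

/-- Circuit–cocircuit-reversal equivalence: the equivalence relation generated by circuit
reversals and cocircuit reversals. -/
def CCEquiv {r m : ℕ} (A : Matrix (Fin r) (Fin m) ℤ) : (Fin m → ℤ) → (Fin m → ℤ) → Prop :=
  Relation.EqvGen (CCReversal A)

namespace BBY

open Module

variable {ι : Type*} [Fintype ι] [DecidableEq ι]

/-- The standard dot-product bilinear form on `ι → ℚ`. -/
noncomputable def dotB (ι : Type*) [Fintype ι] : LinearMap.BilinForm ℚ (ι → ℚ) :=
  LinearMap.mk₂ ℚ (fun x y => x ⬝ᵥ y)
    (fun x x' y => add_dotProduct x x' y)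
    (fun a x y => smul_dotProduct a x y)
    (fun x y y' => dotProduct_add x y y')
    (fun a x y => dotProduct_smul a x y)

@[simp] lemma dotB_apply (x y : ι → ℚ) : dotB ι x y = x ⬝ᵥ y := rfl

lemma dotB_refl : (dotB ι).IsRefl := fun x y h => by
  simpa [dotProduct_comm] using h

lemma dotB_nondeg : (dotB ι).Nondegenerate := ⟨fun x hx => by
  funext i
  simpa using hx (Pi.single i 1), fun x hx => by
  funext i
  simpa using hx (Pi.single i 1)⟩

/-- Orthogonal complement w.r.t. the dot product. -/
noncomputable def orth (V : Submodule ℚ (ι → ℚ)) : Submodule ℚ (ι → ℚ) :=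
  (dotB ι).orthogonal V

lemma mem_orth {V : Submodule ℚ (ι → ℚ)} {z : ι → ℚ} :
    z ∈ orth V ↔ ∀ x ∈ V, x ⬝ᵥ z = 0 := Iff.rfl

lemma orth_orth (V : Submodule ℚ (ι → ℚ)) : orth (orth V) = V :=
  LinearMap.BilinForm.orthogonal_orthogonal dotB_nondeg dotB_refl V

lemma orth_sup (U V : Submodule ℚ (ι → ℚ)) : orth (U ⊔ V) = orth U ⊓ orth V := by
  apply le_antisymm
  · intro z hz
    exact ⟨fun x hx => hz x (Submodule.mem_sup_left hx),
           fun x hx => hz x (Submodule.mem_sup_right hx)⟩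
  · intro z hz x hx
    rcases Submodule.mem_sup.1 hx with ⟨a, ha, b, hb, rfl⟩
    have h1 := hz.1 a ha
    have h2 := hz.2 b hb
    show (a + b) ⬝ᵥ z = 0
    rw [add_dotProduct]
    simpa using congrArg₂ (· + ·) h1 h2

lemma orth_inf (U V : Submodule ℚ (ι → ℚ)) : orth (U ⊓ V) = orth U ⊔ orth V := by
  conv_lhs => rw [← orth_orth U, ← orth_orth V, ← orth_sup, orth_orth]

/-- The subspace of vectors supported inside `S`. -/
def coordSub (S : Finset ι) : Submodule ℚ (ι → ℚ) where
  carrier := {z | ∀ e ∉ S, z e = 0}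
  add_mem' := fun ha hb e he => by simp [ha e he, hb e he]
  zero_mem' := fun e _ => rfl
  smul_mem' := fun c z hz e he => by simp [hz e he]

lemma mem_coordSub {S : Finset ι} {z : ι → ℚ} : z ∈ coordSub S ↔ ∀ e ∉ S, z e = 0 := Iff.rfl

lemma orth_coordSub (S : Finset ι) : orth (coordSub S) = coordSub Sᶜ := by
  apply le_antisymm
  · intro z hz
    intro e he
    have hs : e ∈ S := by simpa using he
    have h1 : (Pi.single e 1 : ι → ℚ) ∈ coordSub S := by
      intro f hf
      have : f ≠ e := fun h => hf (h ▸ hs)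
      simp [Pi.single_apply, this]
    have h2 : (Pi.single e 1 : ι → ℚ) ⬝ᵥ z = 0 := hz _ h1
    rw [single_dotProduct, one_mul] at h2
    exact h2
  · intro z hz x hx
    show x ⬝ᵥ z = 0
    apply Finset.sum_eq_zero
    intro e _
    by_cases he : e ∈ S
    · have : z e = 0 := hz e (by simpa using he)
      simp [this]
    · simp [hx e he]

variable {κ : Type*} [Fintype κ]

lemma range_le_orth_ker (M : Matrix κ ι ℚ) :
    LinearMap.range Mᵀ.mulVecLin ≤ orth (LinearMap.ker M.mulVecLin) := by
  rintro z ⟨y, rfl⟩ x hx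
  have hx0 : M.mulVec x = 0 := hx
  show x ⬝ᵥ Mᵀ.mulVec y = 0
  rw [dotProduct_mulVec, vecMul_transpose, hx0, zero_dotProduct]

lemma orth_ker (M : Matrix κ ι ℚ) :
    orth (LinearMap.ker M.mulVecLin) = LinearMap.range Mᵀ.mulVecLin := by
  refine (Submodule.eq_of_le_of_finrank_le (range_le_orth_ker M) ?_).symm
  have h1 : finrank ℚ (orth (LinearMap.ker M.mulVecLin)) =
      finrank ℚ (ι → ℚ) - finrank ℚ (LinearMap.ker M.mulVecLin) :=
    LinearMap.BilinForm.finrank_orthogonal dotB_nondeg _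
  have h2 := LinearMap.finrank_range_add_finrank_ker (M.mulVecLin)
  have h3 : finrank ℚ (LinearMap.range Mᵀ.mulVecLin) = finrank ℚ (LinearMap.range M.mulVecLin) := by
    have := Matrix.rank_transpose M
    simpa [Matrix.rank] using this
  omega

lemma orth_range (M : Matrix κ ι ℚ) :
    orth (LinearMap.range Mᵀ.mulVecLin) = LinearMap.ker M.mulVecLin := by
  rw [← orth_ker, orth_orth]

end BBY
section P2

open Module Finset

variable {ι : Type*} [Fintype ι] [DecidableEq ι]

namespace BBY

lemma sq_one_mul {a x z : ℚ} (ha : a = 1 ∨ a = -1) : (a * x) * (a * z) = x * z := by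
  rcases ha with rfl | rfl <;> ring

/-- Painted per-element Minty/Tucker dichotomy for a subspace and its orthogonal
complement. -/
lemma dichotomy (V : Submodule ℚ (ι → ℚ)) (ε : ι → ℚ) (hε : ∀ e, ε e = 1 ∨ ε e = -1)
    (G : Finset ι) : ∀ Zx Zz : Finset ι, (∀ e, e ∈ G ∨ e ∈ Zx ∨ e ∈ Zz) →
    (∀ e ∈ G, e ∉ Zx) → (∀ e ∈ G, e ∉ Zz) → (∀ e ∈ Zx, e ∉ Zz) →
    ∀ g ∈ G,
    (∃ x ∈ V, (∀ e ∈ Zx, x e = 0) ∧ (∀ e ∈ G, 0 ≤ ε e * x e) ∧ 0 < ε g * x g) ∨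
    (∃ z ∈ orth V, (∀ e ∈ Zz, z e = 0) ∧ (∀ e ∈ G, 0 ≤ ε e * z e) ∧ 0 < ε g * z g) := by
  induction G using Finset.strongInduction with
  | _ G IH =>
  intro Zx Zz hcov hGx hGz hxz g hg
  by_cases hj : ∃ j ∈ G, j ≠ g
  · obtain ⟨j, hjG, hjg⟩ := hj
    -- first recursive call : `j` moved to the `x = 0` zone
    have ha := IH (G.erase j) (Finset.erase_ssubset hjG) (insert j Zx) Zz
      (fun e => by
        rcases eq_or_ne e j with rfl | hne
        · exact Or.inr (Or.inl (Finset.mem_insert_self _ _))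
        · rcases hcov e with h | h | h
          · exact Or.inl (Finset.mem_erase.2 ⟨hne, h⟩)
          · exact Or.inr (Or.inl (Finset.mem_insert_of_mem h))
          · exact Or.inr (Or.inr h))
      (fun e he hmem => by
        rcases Finset.mem_insert.1 hmem with rfl | hmem'
        · exact (Finset.mem_erase.1 he).1 rfl
        · exact hGx e (Finset.mem_of_mem_erase he) hmem')
      (fun e he => hGz e (Finset.mem_of_mem_erase he))
      (fun e he => by
        rcases Finset.mem_insert.1 he with rfl | he'
        · exact hGz e hjG
        · exact hxz e he')
      g (Finset.mem_erase.2 ⟨hjg.symm, hg⟩)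
    rcases ha with ⟨x, hxV, hxZ, hxG, hxg⟩ | ⟨z1, hz1W, hz1Z, hz1G, hz1g⟩
    · -- win for x
      refine Or.inl ⟨x, hxV, fun e he => hxZ e (Finset.mem_insert_of_mem he), ?_, hxg⟩
      intro e he
      rcases eq_or_ne e j with rfl | hne
      · rw [hxZ e (Finset.mem_insert_self _ _), mul_zero]
      · exact hxG e (Finset.mem_erase.2 ⟨hne, he⟩)
    · -- second recursive call : `j` moved to the `z = 0` zone
      have hb := IH (G.erase j) (Finset.erase_ssubset hjG) Zx (insert j Zz)
        (fun e => by
          rcases eq_or_ne e j with rfl | hne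
          · exact Or.inr (Or.inr (Finset.mem_insert_self _ _))
          · rcases hcov e with h | h | h
            · exact Or.inl (Finset.mem_erase.2 ⟨hne, h⟩)
            · exact Or.inr (Or.inl h)
            · exact Or.inr (Or.inr (Finset.mem_insert_of_mem h)))
        (fun e he => hGx e (Finset.mem_of_mem_erase he))
        (fun e he hmem => by
          rcases Finset.mem_insert.1 hmem with rfl | hmem'
          · exact (Finset.mem_erase.1 he).1 rfl
          · exact hGz e (Finset.mem_of_mem_erase he) hmem')
        (fun e he hmem => by
          rcases Finset.mem_insert.1 hmem with rfl | hmem'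
          · exact hGx e hjG he
          · exact hxz e he hmem')
        g (Finset.mem_erase.2 ⟨hjg.symm, hg⟩)
      rcases hb with ⟨x1, hx1V, hx1Z, hx1G, hx1g⟩ | ⟨z, hzW, hzZ, hzG, hzg⟩
      · -- combine the two leftovers
        have hdot : x1 ⬝ᵥ z1 = 0 := hz1W x1 hx1V
        have hsum : ∑ e, x1 e * z1 e = 0 := hdot
        have htnn : ∀ e ∈ Finset.univ.erase j, 0 ≤ x1 e * z1 e := by
          intro e he
          have hne : e ≠ j := (Finset.mem_erase.1 he).1
          rcases hcov e with h | h | h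
          · have h1 := hx1G e (Finset.mem_erase.2 ⟨hne, h⟩)
            have h2 := hz1G e (Finset.mem_erase.2 ⟨hne, h⟩)
            have := mul_nonneg h1 h2
            rwa [sq_one_mul (hε e)] at this
          · rw [hx1Z e h, zero_mul]
          · rw [hz1Z e h, mul_zero]
        have htg : 0 < x1 g * z1 g := by
          have := mul_pos hx1g hz1g
          rwa [sq_one_mul (hε g)] at this
        have hgmem : g ∈ Finset.univ.erase j :=
          Finset.mem_erase.2 ⟨(hjg.symm : g ≠ j), Finset.mem_univ g⟩
        have hge : x1 g * z1 g ≤ ∑ e ∈ Finset.univ.erase j, x1 e * z1 e :=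
          Finset.single_le_sum htnn hgmem
        have hsplit : ∑ e ∈ Finset.univ.erase j, x1 e * z1 e + x1 j * z1 j = 0 := by
          rw [Finset.sum_erase_add _ _ (Finset.mem_univ j)]
          exact hsum
        have hjneg : x1 j * z1 j < 0 := by linarith
        have hmul : (ε j * x1 j) * (ε j * z1 j) < 0 := by
          rw [sq_one_mul (hε j)]; exact hjneg
        rcases lt_trichotomy (ε j * x1 j) 0 with hneg | h0 | hpos
        · -- z1 wins
          have hzj : 0 < ε j * z1 j := by nlinarith
          refine Or.inr ⟨z1, hz1W, hz1Z, ?_, hz1g⟩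
          intro e he
          rcases eq_or_ne e j with rfl | hne
          · exact le_of_lt hzj
          · exact hz1G e (Finset.mem_erase.2 ⟨hne, he⟩)
        · rw [h0, zero_mul] at hmul; exact absurd hmul (lt_irrefl 0)
        · -- x1 wins
          refine Or.inl ⟨x1, hx1V, hx1Z, ?_, hx1g⟩
          intro e he
          rcases eq_or_ne e j with rfl | hne
          · exact le_of_lt hpos
          · exact hx1G e (Finset.mem_erase.2 ⟨hne, he⟩)
      · -- win for z
        refine Or.inr ⟨z, hzW, fun e he => hzZ e (Finset.mem_insert_of_mem he), ?_, hzg⟩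
        intro e he
        rcases eq_or_ne e j with rfl | hne
        · rw [hzZ e (Finset.mem_insert_self _ _), mul_zero]
        · exact hzG e (Finset.mem_erase.2 ⟨hne, he⟩)
  · -- base case : `G = {g}`
    push_neg at hj
    by_cases hex : ∃ x ∈ V, (∀ e ∈ Zx, x e = 0) ∧ x g ≠ 0
    · obtain ⟨x, hxV, hxZ, hxg⟩ := hex
      have hkey : ε g * ((ε g * (x g)⁻¹) * x g) = 1 := by
        rcases hε g with h | h <;> rw [h] <;> field_simp
      refine Or.inl ⟨(ε g * (x g)⁻¹) • x, Submodule.smul_mem _ _ hxV, ?_, ?_, ?_⟩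
      · intro e he; simp [hxZ e he]
      · intro e he
        have heg : e = g := hj e he
        subst heg
        show 0 ≤ ε e * ((ε e * (x e)⁻¹) * x e)
        rw [hkey]; norm_num
      · show 0 < ε g * ((ε g * (x g)⁻¹) * x g)
        rw [hkey]; norm_num
    · push_neg at hex
      have hsing : (Pi.single g 1 : ι → ℚ) ∈ orth (V ⊓ coordSub Zxᶜ) := by
        intro x hx
        have hx2 : ∀ e ∈ Zx, x e = 0 := by
          intro e he
          exact hx.2 e (by simpa using he)
        have hxg : x g = 0 := hex x hx.1 hx2
        show x ⬝ᵥ Pi.single g 1 = 0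
        rw [dotProduct_single, hxg, zero_mul]
      rw [orth_inf, orth_coordSub, compl_compl] at hsing
      obtain ⟨z', hz'W, k, hk, hzk⟩ := Submodule.mem_sup.1 hsing
      have hz'eq : z' = Pi.single g 1 - k := by
        rw [← hzk]; abel
      have hkg : k g = 0 := hk g (hGx g hg)
      have hz'g : z' g = 1 := by
        rw [hz'eq]; simp [hkg]
      refine Or.inr ⟨ε g • z', Submodule.smul_mem _ _ hz'W, ?_, ?_, ?_⟩
      · intro e he
        have heg : e ≠ g := fun h => hGz g hg (h ▸ he)
        have hke : k e = 0 := hk e (fun hmem => hxz e hmem he)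
        show ε g * z' e = 0
        rw [hz'eq]
        simp [Pi.single_apply, heg, hke]
      · intro e he
        have heg : e = g := hj e he
        subst heg
        show 0 ≤ ε e * (ε e * z' e)
        rw [hz'g, mul_one]
        rcases hε e with h | h <;> rw [h] <;> norm_num
      · show 0 < ε g * (ε g * z' g)
        rw [hz'g, mul_one]
        rcases hε g with h | h <;> rw [h] <;> norm_num

end BBY
end P2
section P3

open Module Finset

variable {ι : Type*} [Fintype ι] [DecidableEq ι]

namespace BBY

/-- Painted Tucker theorem: complementary pair of sign-constrained vectors. -/
lemma tucker (V : Submodule ℚ (ι → ℚ)) (ε : ι → ℚ) (hε : ∀ e, ε e = 1 ∨ ε e = -1)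
    (G : Finset ι) :
    ∃ x ∈ V, ∃ z ∈ orth V, (∀ e ∉ G, x e = 0) ∧
      (∀ e ∈ G, 0 ≤ ε e * x e) ∧ (∀ e ∈ G, 0 ≤ ε e * z e) ∧
      (∀ e ∈ G, 0 < ε e * (x e + z e)) := by
  have H : ∀ g ∈ G, ∃ p : (ι → ℚ) × (ι → ℚ), p.1 ∈ V ∧ p.2 ∈ orth V ∧
      (∀ e ∉ G, p.1 e = 0) ∧ (∀ e ∈ G, 0 ≤ ε e * p.1 e) ∧ (∀ e ∈ G, 0 ≤ ε e * p.2 e) ∧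
      0 < ε g * (p.1 g + p.2 g) := by
    intro g hg
    have hd := dichotomy V ε hε G Gᶜ ∅
      (fun e => by
        by_cases h : e ∈ G
        · exact Or.inl h
        · exact Or.inr (Or.inl (Finset.mem_compl.2 h)))
      (fun e he hc => (Finset.mem_compl.1 hc) he)
      (fun e _ hc => (Finset.notMem_empty e) hc)
      (fun e _ hc => (Finset.notMem_empty e) hc)
      g hg
    rcases hd with ⟨x, hxV, hxZ, hxG, hxg⟩ | ⟨z, hzW, _, hzG, hzg⟩
    · refine ⟨(x, 0), hxV, Submodule.zero_mem _,
        (fun e he => hxZ e (Finset.mem_compl.2 he)), hxG, by simp, by simpa using hxg⟩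
    · refine ⟨(0, z), Submodule.zero_mem _, hzW, by simp, by simp, hzG, by simpa using hzg⟩
  choose! p hp1 hp2 hp3 hp4 hp5 hp6 using H
  refine ⟨∑ g ∈ G, (p g).1, Submodule.sum_mem _ (fun g hg => hp1 g hg),
          ∑ g ∈ G, (p g).2, Submodule.sum_mem _ (fun g hg => hp2 g hg), ?_, ?_, ?_, ?_⟩
  · intro e he
    rw [Finset.sum_apply]
    exact Finset.sum_eq_zero (fun g hg => hp3 g hg e he)
  · intro e he
    rw [Finset.sum_apply, Finset.mul_sum]
    exact Finset.sum_nonneg (fun g hg => hp4 g hg e he)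
  · intro e he
    rw [Finset.sum_apply, Finset.mul_sum]
    exact Finset.sum_nonneg (fun g hg => hp5 g hg e he)
  · intro e he
    rw [Finset.sum_apply, Finset.sum_apply]
    have hres : 0 < ∑ g ∈ G, ε e * ((p g).1 e + (p g).2 e) := by
      apply Finset.sum_pos'
      · intro g hg
        have h1 := hp4 g hg e he
        have h2 := hp5 g hg e he
        rw [mul_add]
        linarith
      · exact ⟨e, he, hp6 e he⟩
    calc (0:ℚ) < ∑ g ∈ G, ε e * ((p g).1 e + (p g).2 e) := hres
    _ = ε e * ((∑ g ∈ G, (p g).1 e) + (∑ g ∈ G, (p g).2 e)) := by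
        rw [← Finset.mul_sum, ← Finset.sum_add_distrib]

/-- `{-1,0,1}`-valued rational vector. -/
def SignVecQ (C : ι → ℚ) : Prop := ∀ e, C e = -1 ∨ C e = 0 ∨ C e = 1

/-- `C` has support that is minimal among supports of nonzero elements of `V`. -/
def MinSupp (V : Submodule ℚ (ι → ℚ)) (C : ι → ℚ) : Prop :=
  ∀ y ∈ V, y ≠ 0 → (∀ e, y e ≠ 0 → C e ≠ 0) → (∀ e, C e ≠ 0 → y e ≠ 0)

noncomputable def fsupp (x : ι → ℚ) : Finset ι := Finset.univ.filter (fun e => x e ≠ 0)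

lemma mem_fsupp {x : ι → ℚ} {e : ι} : e ∈ fsupp x ↔ x e ≠ 0 := by
  simp [fsupp]

lemma sv_sq {C : ι → ℚ} (h : SignVecQ C) {e : ι} (he : C e ≠ 0) : C e * C e = 1 := by
  rcases h e with h1 | h1 | h1
  · rw [h1]; norm_num
  · exact absurd h1 he
  · rw [h1]; norm_num

lemma sv_neg {C : ι → ℚ} (h : SignVecQ C) : SignVecQ (-C) := by
  intro e
  rcases h e with h1 | h1 | h1 <;> simp [h1]

lemma minsupp_neg {V : Submodule ℚ (ι → ℚ)} {C : ι → ℚ} (h : MinSupp V C) :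
    MinSupp V (-C) := by
  intro y hy hy0 hsub e he
  refine h y hy hy0 (fun f hf => ?_) e (by simpa using he)
  have := hsub f hf
  simpa using this

lemma sign_transfer {C y x : ι → ℚ} (hC : ∀ e, C e ≠ 0 → 0 < C e * y e)
    (hxy : ∀ e, y e ≠ 0 → 0 < x e * y e ∨ y e = x e) :
    ∀ e, C e ≠ 0 → 0 < C e * x e := by
  intro e he
  have h1 := hC e he
  have hye : y e ≠ 0 := by
    intro h
    rw [h, mul_zero] at h1
    exact lt_irrefl 0 h1
  rcases hxy e hye with h2 | h2
  · have hy2 : 0 < y e * y e := mul_self_pos.2 hye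
    nlinarith
  · rwa [← h2]

/-- Conformal extraction through a given index: any nonzero `x ∈ V` admits a minimal
support sign vector in `V` through `i`, conformal to `x`. -/
lemma conf_through (V : Submodule ℚ (ι → ℚ)) (Nice : (ι → ℚ) → Prop)
    (hN : ∀ C, Nice C → Nice (-C))
    (HE : ∀ x ∈ V, x ≠ 0 → ∃ C, C ∈ V ∧ Nice C ∧ SignVecQ C ∧ C ≠ 0 ∧
       (∀ e, C e ≠ 0 → x e ≠ 0) ∧ MinSupp V C) :
    ∀ (n : ℕ) (x : ι → ℚ), x ∈ V → (fsupp x).card ≤ n → ∀ i, x i ≠ 0 →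
    ∃ C, C ∈ V ∧ Nice C ∧ SignVecQ C ∧ MinSupp V C ∧ C i ≠ 0 ∧
      (∀ e, C e ≠ 0 → 0 < C e * x e) := by
  intro n
  induction n with
  | zero =>
    intro x _ hcard i hi
    exact absurd hcard (by
      simp only [Nat.le_zero, Finset.card_eq_zero]
      intro h
      have : i ∈ fsupp x := mem_fsupp.2 hi
      rw [h] at this
      exact Finset.notMem_empty i this)
  | succ n IH =>
    intro x hxV hcard i hi
    have hx0 : x ≠ 0 := fun h => hi (by rw [h]; rfl)
    obtain ⟨C0, hC0V, hC0N, hC0S, hC0ne, hC0supp, hC0min⟩ := HE x hxV hx0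
    -- pivot index
    obtain ⟨d, hd⟩ : ∃ d, C0 d ≠ 0 ∧ (C0 i ≠ 0 → d = i) := by
      by_cases h : C0 i ≠ 0
      · exact ⟨i, h, fun _ => rfl⟩
      · obtain ⟨d, hd⟩ := Function.ne_iff.1 hC0ne
        exact ⟨d, by simpa using hd, fun hc => absurd hc h⟩
    -- normalize the sign at the pivot
    obtain ⟨C1, hC1V, hC1N, hC1S, hC1supp, hC1min, hC1d, hC1i⟩ :
        ∃ C1, C1 ∈ V ∧ Nice C1 ∧ SignVecQ C1 ∧ (∀ e, C1 e ≠ 0 → x e ≠ 0) ∧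
          MinSupp V C1 ∧ 0 < C1 d * x d ∧ (∀ e, C1 e = 0 ↔ C0 e = 0) := by
      have hxd : x d ≠ 0 := hC0supp d hd.1
      rcases lt_trichotomy (C0 d * x d) 0 with hneg | h0 | hpos
      · refine ⟨-C0, Submodule.neg_mem _ hC0V, hN _ hC0N, sv_neg hC0S,
          (fun e he => hC0supp e (by simpa using he)), minsupp_neg hC0min, ?_, ?_⟩
        · show 0 < -C0 d * x d
          nlinarith
        · intro e; simp
      · exact absurd h0 (mul_ne_zero hd.1 hxd)
      · exact ⟨C0, hC0V, hC0N, hC0S, hC0supp, hC0min, hpos, fun e => Iff.rfl⟩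
    by_cases hconf : ∀ e, C1 e ≠ 0 → 0 < C1 e * x e
    · by_cases hCi : C1 i = 0
      case neg => exact ⟨C1, hC1V, hC1N, hC1S, hC1min, hCi, hconf⟩
      case pos =>
        -- subtract `t₀ • C1` where `t₀` is the minimum ratio
        have hPne : (fsupp C1).Nonempty := ⟨d, mem_fsupp.2 (by
          intro h; rw [h, zero_mul] at hC1d; exact lt_irrefl 0 hC1d)⟩
        obtain ⟨es, hesP, hesmin⟩ := Finset.exists_min_image (fsupp C1) (fun e => x e * C1 e) hPne
        have hesne : C1 es ≠ 0 := mem_fsupp.1 hesP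
        set t0 : ℚ := x es * C1 es with ht0
        have ht0pos : 0 < t0 := by
          have := hconf es hesne
          rw [ht0]; nlinarith
        set y : ι → ℚ := x - t0 • C1 with hy
        have hyV : y ∈ V := Submodule.sub_mem _ hxV (Submodule.smul_mem _ _ hC1V)
        have hyes : y es = 0 := by
          have hsq := sv_sq hC1S hesne
          show x es - t0 * C1 es = 0
          rw [ht0]; linear_combination (- x es) * hsq
        have hysupp : ∀ e, y e ≠ 0 → x e ≠ 0 := by
          intro e he
          by_contra h
          have hC1e : C1 e = 0 := by
            by_contra hc
            exact (hC1supp e hc) h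
          apply he
          show x e - t0 * C1 e = 0
          rw [h, hC1e]; ring
        have hcard' : (fsupp y).card ≤ n := by
          have hsub : fsupp y ⊆ (fsupp x).erase es := by
            intro e he
            refine Finset.mem_erase.2 ⟨?_, mem_fsupp.2 (hysupp e (mem_fsupp.1 he))⟩
            intro h
            exact (mem_fsupp.1 he) (h ▸ hyes)
          have h1 : (fsupp y).card ≤ ((fsupp x).erase es).card := Finset.card_le_card hsub
          have h2 : es ∈ fsupp x := mem_fsupp.2 (hC1supp es hesne)
          have h3 := Finset.card_erase_of_mem h2
          omega
        have hyi : y i ≠ 0 := by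
          have h7 : y i = x i := by
            show x i - t0 * C1 i = x i
            rw [hCi]; ring
          rw [h7]; exact hi
        obtain ⟨C, hCV, hCN, hCS, hCmin, hCi', hCconf⟩ := IH y hyV hcard' i hyi
        refine ⟨C, hCV, hCN, hCS, hCmin, hCi', ?_⟩
        apply sign_transfer hCconf
        intro e hye
        by_cases hC1e : C1 e = 0
        · right
          show x e - t0 * C1 e = x e
          rw [hC1e]; ring
        · left
          have hs := hconf e hC1e
          have hsmin : t0 ≤ x e * C1 e := hesmin e (mem_fsupp.2 hC1e)
          have hsq := sv_sq hC1S hC1e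
          have hyne : x e * C1 e - t0 ≠ 0 := by
            intro h
            apply hye
            show x e - t0 * C1 e = 0
            linear_combination C1 e * h - x e * hsq
          have hid : x e * y e = (x e * C1 e) * (x e * C1 e - t0) := by
            show x e * (x e - t0 * C1 e) = _
            linear_combination (- (x e * x e)) * hsq
          rw [hid]
          have h4 : t0 < x e * C1 e := lt_of_le_of_ne hsmin (fun h => hyne (by rw [← h]; ring))
          exact mul_pos (lt_trans ht0pos h4) (sub_pos.2 h4)
    · -- non-conformal case : add `t₁ • C1` along the negative part
      obtain ⟨e0, he0ne, he0np⟩ : ∃ e, C1 e ≠ 0 ∧ ¬ 0 < C1 e * x e := by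
        by_contra hP
        push_neg at hP
        exact hconf (fun e he => hP e he)
      have he0neg : x e0 * C1 e0 < 0 := by
        have hxe0 : x e0 ≠ 0 := hC1supp e0 he0ne
        have hne0 : C1 e0 * x e0 ≠ 0 := mul_ne_zero he0ne hxe0
        rw [mul_comm]
        exact lt_of_le_of_ne (not_lt.1 he0np) hne0
      set N : Finset ι := Finset.univ.filter (fun e => x e * C1 e < 0) with hN'
      have hNne : N.Nonempty := ⟨e0, by simp [hN', he0neg]⟩
      obtain ⟨es, hesN, hesmin⟩ := Finset.exists_min_image N (fun e => -(x e * C1 e)) hNne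
      have hesneg : x es * C1 es < 0 := by
        have := Finset.mem_filter.1 hesN
        exact this.2
      have hesne : C1 es ≠ 0 := by
        intro h; rw [h, mul_zero] at hesneg; exact lt_irrefl 0 hesneg
      set t1 : ℚ := -(x es * C1 es) with ht1
      have ht1pos : 0 < t1 := by rw [ht1]; linarith
      set y : ι → ℚ := x + t1 • C1 with hy
      have hyV : y ∈ V := Submodule.add_mem _ hxV (Submodule.smul_mem _ _ hC1V)
      have hyes : y es = 0 := by
        have hsq := sv_sq hC1S hesne
        show x es + t1 * C1 es = 0
        rw [ht1]; linear_combination (- x es) * hsq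
      have hysupp : ∀ e, y e ≠ 0 → x e ≠ 0 := by
        intro e he
        by_contra h
        have hC1e : C1 e = 0 := by
          by_contra hc
          exact (hC1supp e hc) h
        apply he
        show x e + t1 * C1 e = 0
        rw [h, hC1e]; ring
      have hcard' : (fsupp y).card ≤ n := by
        have hsub : fsupp y ⊆ (fsupp x).erase es := by
          intro e he
          refine Finset.mem_erase.2 ⟨?_, mem_fsupp.2 (hysupp e (mem_fsupp.1 he))⟩
          intro h
          exact (mem_fsupp.1 he) (h ▸ hyes)
        have h1 : (fsupp y).card ≤ ((fsupp x).erase es).card := Finset.card_le_card hsub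
        have h2 : es ∈ fsupp x := mem_fsupp.2 (hC1supp es hesne)
        have h3 := Finset.card_erase_of_mem h2
        omega
      -- the signs of `y` agree with those of `x`, and `y i ≠ 0`
      have hxy : ∀ e, y e ≠ 0 → 0 < x e * y e ∨ y e = x e := by
        intro e hye
        by_cases hC1e : C1 e = 0
        · right
          show x e + t1 * C1 e = x e
          rw [hC1e]; ring
        · left
          have hsq := sv_sq hC1S hC1e
          have hxe : x e ≠ 0 := hC1supp e hC1e
          have hkey : x e * y e = (x e * C1 e) * (x e * C1 e + t1) := by
            show x e * (x e + t1 * C1 e) = _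
            linear_combination (- (x e * x e)) * hsq
          rw [hkey]
          rcases lt_trichotomy (x e * C1 e) 0 with hneg | h0 | hpos
          · have hmem : e ∈ N := by simp [hN', hneg]
            have hle := hesmin e hmem
            have h5 : x e * C1 e + t1 ≤ 0 := by rw [ht1] at *; linarith
            have h6 : x e * C1 e + t1 ≠ 0 := by
              intro h
              apply hye
              show x e + t1 * C1 e = 0
              linear_combination C1 e * h - x e * hsq
            exact mul_pos_of_neg_of_neg hneg (lt_of_le_of_ne h5 h6)
          · exact absurd h0 (mul_ne_zero hxe hC1e)
          · exact mul_pos hpos (by linarith)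
      have hyi : y i ≠ 0 := by
        by_cases hC1e : C1 i = 0
        · have h7 : y i = x i := by
            show x i + t1 * C1 i = x i
            rw [hC1e]; ring
          rw [h7]; exact hi
        · have hC0i : C0 i ≠ 0 := fun h => hC1e ((hC1i i).2 h)
          have hdi : d = i := hd.2 hC0i
          have hposi : 0 < C1 i * x i := hdi ▸ hC1d
          have hsq := sv_sq hC1S hC1e
          have h8 : C1 i * y i = C1 i * x i + t1 := by
            show C1 i * (x i + t1 * C1 i) = _
            linear_combination t1 * hsq
          intro h
          rw [h, mul_zero] at h8
          linarith
      obtain ⟨C, hCV, hCN, hCS, hCmin, hCi', hCconf⟩ := IH y hyV hcard' i hyi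
      exact ⟨C, hCV, hCN, hCS, hCmin, hCi', sign_transfer hCconf hxy⟩

end BBY
end P3
section P4

open Module Finset

namespace BBY

variable {ι : Type*} [Fintype ι] [DecidableEq ι]

lemma exists_minsupp (V : Submodule ℚ (ι → ℚ)) :
    ∀ (n : ℕ) (x : ι → ℚ), x ∈ V → x ≠ 0 → (fsupp x).card ≤ n →
    ∃ z, z ∈ V ∧ z ≠ 0 ∧ (∀ e, z e ≠ 0 → x e ≠ 0) ∧ MinSupp V z := by
  intro n
  induction n with
  | zero =>
    intro x _ hx0 hcard
    obtain ⟨e, he⟩ := Function.ne_iff.1 hx0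
    have : e ∈ fsupp x := mem_fsupp.2 (by simpa using he)
    have h1 : 0 < (fsupp x).card := Finset.card_pos.2 ⟨e, this⟩
    omega
  | succ n IH =>
    intro x hxV hx0 hcard
    by_cases hmin : MinSupp V x
    · exact ⟨x, hxV, hx0, fun e he => he, hmin⟩
    · unfold MinSupp at hmin
      push_neg at hmin
      obtain ⟨y, hyV, hy0, hysub, e0, he0x, he0y⟩ := hmin
      have hsub : fsupp y ⊆ (fsupp x).erase e0 := by
        intro e he
        have hye : y e ≠ 0 := mem_fsupp.1 he
        refine Finset.mem_erase.2 ⟨?_, mem_fsupp.2 (hysub e hye)⟩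
        intro h
        exact hye (h ▸ he0y)
      have hcard' : (fsupp y).card ≤ n := by
        have h1 := Finset.card_le_card hsub
        have h2 := Finset.card_erase_of_mem (mem_fsupp.2 he0x)
        omega
      obtain ⟨z, hzV, hz0, hzsub, hzmin⟩ := IH y hyV hy0 hcard'
      exact ⟨z, hzV, hz0, fun e he => hysub e (hzsub e he), hzmin⟩

lemma minsupp_congr {V : Submodule ℚ (ι → ℚ)} {C z : ι → ℚ}
    (h : ∀ e, C e ≠ 0 ↔ z e ≠ 0) (hz : MinSupp V z) : MinSupp V C := by
  intro y hy hy0 hsub e he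
  exact hz y hy hy0 (fun f hf => (h f).1 (hsub f hf)) e ((h e).1 he)

lemma orth_bot : orth (⊥ : Submodule ℚ (ι → ℚ)) = ⊤ := by
  refine eq_top_iff.2 (fun z _ => ?_)
  intro x hx
  have : x = 0 := hx
  show x ⬝ᵥ z = 0
  rw [this, zero_dotProduct]

lemma exists_indep_subfamily {κ : Type*} [Fintype κ] [DecidableEq κ]
    {W : Type*} [AddCommGroup W] [Module ℚ W] (v : κ → W) :
    ∃ T : Finset κ, LinearIndependent ℚ (fun t : ↥T => v t) ∧
      Submodule.span ℚ (Set.range (fun t : ↥T => v t)) = Submodule.span ℚ (Set.range v) := by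
  classical
  obtain ⟨t, hts, htsp, htind⟩ := exists_linearIndependent ℚ (Set.range v)
  have hfin : t.Finite := (Set.finite_range v).subset hts
  haveI : Fintype ↥t := hfin.fintype
  choose φ hφ using (fun w : t => hts w.2)
  have hφinj : Function.Injective φ := by
    intro w w' h
    apply Subtype.ext
    rw [← hφ w, ← hφ w', h]
  let T : Finset κ := Finset.univ.image φ
  have hmem : ∀ w : t, φ w ∈ T := fun w => Finset.mem_image_of_mem φ (Finset.mem_univ w)
  have hsurj : ∀ s : ↥T, ∃ w : t, φ w = ↑s := by
    intro s
    obtain ⟨w, _, hw⟩ := Finset.mem_image.1 s.2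
    exact ⟨w, hw⟩
  let e : t ≃ ↥T := Equiv.ofBijective (fun w => ⟨φ w, hmem w⟩)
    ⟨fun w w' h => hφinj (congrArg Subtype.val h),
     fun s => by obtain ⟨w, hw⟩ := hsurj s; exact ⟨w, Subtype.ext hw⟩⟩
  have hcomp : (fun s : ↥T => v ↑s) ∘ e = fun w : t => (w : W) := by
    funext w
    show v (φ w) = ↑w
    exact hφ w
  have hind : LinearIndependent ℚ (fun s : ↥T => v ↑s) := by
    rw [← linearIndependent_equiv e, hcomp]
    exact htind
  have hrange : Set.range (fun s : ↥T => v ↑s) = t := by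
    rw [← Function.Surjective.range_comp e.surjective (fun s : ↥T => v ↑s), hcomp,
      Subtype.range_coe]
  exact ⟨T, hind, by rw [hrange, htsp]⟩

end BBY
end P4
section P5

open Module Finset

namespace BBY

variable {ι : Type*} [Fintype ι] [DecidableEq ι]

lemma mulVec_eq_sum_smul_cols {κ : Type*} [Fintype κ] {R : Type*} [CommRing R]
    {n : Type*} [Fintype n] (B : Matrix n κ R) (c : κ → R) :
    B.mulVec c = ∑ j, c j • (fun i => B i j) := by
  funext i
  rw [Finset.sum_apply]
  simp only [Pi.smul_apply, smul_eq_mul]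
  show (B i) ⬝ᵥ c = _
  simp [dotProduct, mul_comm]

/-- A matrix with linearly independent columns has a square row-submatrix with
nonzero determinant. -/
lemma exists_nonzero_det_rows {κ : Type*} [Fintype κ] [DecidableEq κ]
    {r : Type*} [Fintype r] [DecidableEq r] (B : Matrix r κ ℚ)
    (hcols : LinearIndependent ℚ (fun j : κ => fun i => B i j)) :
    ∃ ρ : κ → r, Function.Injective ρ ∧ (B.submatrix ρ id).det ≠ 0 := by
  classical
  have hker : LinearMap.ker B.mulVecLin = ⊥ := by
    rw [LinearMap.ker_eq_bot']
    intro c hc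
    have hc' : B.mulVec c = 0 := hc
    rw [mulVec_eq_sum_smul_cols] at hc'
    have := Fintype.linearIndependent_iff.1 hcols c hc'
    funext j
    exact this j
  have hspan : Submodule.span ℚ (Set.range (fun i : r => (fun j => B i j))) = ⊤ := by
    have h1 := orth_ker B
    rw [hker, orth_bot] at h1
    rw [h1, Matrix.range_mulVecLin]
    rfl
  obtain ⟨T, hTind, hTspan⟩ := exists_indep_subfamily (fun i : r => (fun j => B i j))
  rw [hspan] at hTspan
  have hbasis : Basis ↥T ℚ (κ → ℚ) := Basis.mk hTind (by rw [hTspan])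
  have hcard : Fintype.card ↥T = Fintype.card κ := by
    have h1 := Module.finrank_eq_card_basis hbasis
    rw [Module.finrank_pi] at h1
    omega
  let e : κ ≃ ↥T := Fintype.equivOfCardEq hcard.symm
  refine ⟨fun k => ↑(e k), fun a b h => e.injective (Subtype.ext h), ?_⟩
  intro hdet
  have hdet' : (B.submatrix (fun k => ↑(e k)) id)ᵀ.det = 0 := by
    rw [Matrix.det_transpose]; exact hdet
  obtain ⟨c, hc0, hc⟩ := Matrix.exists_mulVec_eq_zero_iff.2 hdet'
  have hrows : LinearIndependent ℚ (fun k : κ => (fun j => B (↑(e k) : r) j)) := by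
    have h2 : (fun s : ↥T => (fun j => B (↑s : r) j)) ∘ e = fun k : κ => (fun j => B (↑(e k) : r) j) := rfl
    rw [← h2, linearIndependent_equiv e]
    exact hTind
  have hsum : ∑ k, c k • (fun j => B (↑(e k) : r) j) = 0 := by
    have h3 := mulVec_eq_sum_smul_cols ((B.submatrix (fun k => ↑(e k)) id)ᵀ) c
    rw [hc] at h3
    exact h3.symm
  have := Fintype.linearIndependent_iff.1 hrows c hsum
  exact hc0 (funext this)

end BBY
end P5
section P6

open Module Finset

namespace BBY

lemma tu_val {r m : ℕ} {Aq : Matrix (Fin r) (Fin m) ℚ} (hTU : Aq.IsTotallyUnimodular)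
    {κ : Type} [Fintype κ] [DecidableEq κ] (f : κ → Fin r) (g : κ → Fin m) :
    (Aq.submatrix f g).det = -1 ∨ (Aq.submatrix f g).det = 0 ∨ (Aq.submatrix f g).det = 1 := by
  obtain ⟨s, hs⟩ := (Matrix.isTotallyUnimodular_iff_fintype.{0} Aq).1 hTU κ f g
  rcases s with _ | _ | _
  · right; left; rw [← hs]; rfl
  · left; rw [← hs]; rfl
  · right; right; rw [← hs]; rfl

lemma HE_ker {r m : ℕ} (Aq : Matrix (Fin r) (Fin m) ℚ) (hTU : Aq.IsTotallyUnimodular) :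
    ∀ x ∈ LinearMap.ker Aq.mulVecLin, x ≠ 0 →
    ∃ C, C ∈ LinearMap.ker Aq.mulVecLin ∧ True ∧ SignVecQ C ∧ C ≠ 0 ∧
      (∀ e, C e ≠ 0 → x e ≠ 0) ∧ MinSupp (LinearMap.ker Aq.mulVecLin) C := by
  intro x hxV hx0
  set V := LinearMap.ker Aq.mulVecLin with hV
  obtain ⟨z, hzV, hz0, hzsub, hzmin⟩ := exists_minsupp V (fsupp x).card x hxV hx0 le_rfl
  have hzker : Aq.mulVec z = 0 := hzV
  obtain ⟨e0, he0⟩ := Function.ne_iff.1 hz0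
  have hze0 : z e0 ≠ 0 := by simpa using he0
  set T : Finset (Fin m) := (fsupp z).erase e0 with hT
  have he0T : e0 ∉ T := Finset.notMem_erase e0 _
  have hTz : ∀ f ∈ T, z f ≠ 0 := fun f hf => mem_fsupp.1 (Finset.mem_of_mem_erase hf)
  -- the columns of `Aq` indexed by `T` are linearly independent
  have hcols : LinearIndependent ℚ (fun j : ↥T => (fun i => Aq i (↑j : Fin m))) := by
    rw [Fintype.linearIndependent_iff]
    intro c hc
    set ch : Fin m → ℚ := fun f => if h : f ∈ T then c ⟨f, h⟩ else 0 with hch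
    have hchker : Aq.mulVec ch = 0 := by
      funext i
      show ∑ f : Fin m, Aq i f * ch f = 0
      rw [← Finset.sum_subset (Finset.subset_univ T)
        (by
          intro f _ hf
          have : ch f = 0 := by rw [hch]; simp [hf]
          rw [this, mul_zero])]
      rw [← Finset.sum_coe_sort T (fun f => Aq i f * ch f)]
      have h4 := congrFun hc i
      rw [Finset.sum_apply, Pi.zero_apply] at h4
      rw [← h4]
      apply Finset.sum_congr rfl
      intro t _
      have : ch ↑t = c t := by rw [hch]; simp
      rw [this]
      simp [mul_comm]
    have hchV : ch ∈ V := hchker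
    intro j
    by_contra hcj
    have hchne : ch ≠ 0 := by
      intro h
      apply hcj
      have h6 := congrFun h (↑j : Fin m)
      rw [hch] at h6
      simpa [j.2] using h6
    have h7 := hzmin ch hchV hchne
      (fun f hf => by
        by_cases h : f ∈ T
        · exact hTz f h
        · exfalso; apply hf; rw [hch]; simp [h])
      e0 hze0
    exact h7 (by rw [hch]; simp [he0T])
  obtain ⟨ρ, hρinj, hρdet⟩ := exists_nonzero_det_rows
    (Aq.submatrix id (Subtype.val : ↥T → Fin m)) hcols
  set M : Matrix ↥T ↥T ℚ := Aq.submatrix ρ Subtype.val with hM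
  have hMdet : M.det ≠ 0 := hρdet
  have hd : M.det = 1 ∨ M.det = -1 := by
    rcases tu_val hTU ρ (Subtype.val : ↥T → Fin m) with h | h | h
    · right; exact h
    · exact absurd h hMdet
    · left; exact h
  set b : ↥T → ℚ := fun t => - Aq (ρ t) e0 with hb
  set ξ : ↥T → ℚ := (M.det)⁻¹ • M.cramer b with hξ
  have hMξ : M.mulVec ξ = b := by
    rw [hξ]
    have h1 : M.mulVec ((M.det)⁻¹ • M.cramer b) = (M.det)⁻¹ • M.mulVec (M.cramer b) := by
      rw [Matrix.mulVec_smul]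
    rw [h1, Matrix.mulVec_cramer, smul_smul, inv_mul_cancel₀ hMdet, one_smul]
  set xh : Fin m → ℚ := fun f => if f = e0 then 1 else if h : f ∈ T then ξ ⟨f, h⟩ else 0 with hxh
  have hxh_e0 : xh e0 = 1 := by rw [hxh]; simp
  have hxh_T : ∀ t : ↥T, xh ↑t = ξ t := by
    intro t
    have h1 : (↑t : Fin m) ≠ e0 := fun h => he0T (h ▸ t.2)
    rw [hxh]
    simp [h1, t.2]
  have hxh_out : ∀ f, f ≠ e0 → f ∉ T → xh f = 0 := by
    intro f h1 h2
    rw [hxh]; simp [h1, h2]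
  have hrow : ∀ t : ↥T, Aq.mulVec xh (ρ t) = 0 := by
    intro t
    show ∑ f : Fin m, Aq (ρ t) f * xh f = 0
    rw [← Finset.sum_subset (Finset.subset_univ (insert e0 T))
      (by
        intro f _ hf
        rw [Finset.mem_insert] at hf
        push_neg at hf
        rw [hxh_out f hf.1 hf.2, mul_zero])]
    rw [Finset.sum_insert he0T, hxh_e0, mul_one]
    have h3 : ∑ f ∈ T, Aq (ρ t) f * xh f = ∑ s : ↥T, M t s * ξ s := by
      rw [← Finset.sum_coe_sort T (fun f => Aq (ρ t) f * xh f)]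
      apply Finset.sum_congr rfl
      intro s _
      rw [hxh_T s]
      rfl
    rw [h3]
    have h4 : ∑ s : ↥T, M t s * ξ s = M.mulVec ξ t := rfl
    rw [h4, hMξ, hb]
    simp
  -- the adjusted vector agrees with a rescaling of z
  have hq : ∀ f, z e0 * xh f - z f = 0 := by
    set q : Fin m → ℚ := fun f => z e0 * xh f - z f with hqdef
    have hq_e0 : q e0 = 0 := by rw [hqdef]; simp [hxh_e0]
    have hq_out : ∀ f, f ≠ e0 → f ∉ T → q f = 0 := by
      intro f h1 h2
      have hzf : z f = 0 := by
        by_contra hzf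
        exact h2 (Finset.mem_erase.2 ⟨h1, mem_fsupp.2 hzf⟩)
      rw [hqdef]
      simp [hxh_out f h1 h2, hzf]
    have hMq : M.mulVec (fun t : ↥T => q ↑t) = 0 := by
      funext t
      show ∑ s : ↥T, M t s * q ↑s = 0
      have h2 : ∑ f : Fin m, Aq (ρ t) f * q f = ∑ s : ↥T, M t s * q ↑s := by
        rw [← Finset.sum_subset (Finset.subset_univ (insert e0 T))
          (by
            intro f _ hf
            rw [Finset.mem_insert] at hf
            push_neg at hf
            rw [hq_out f hf.1 hf.2, mul_zero])]
        rw [Finset.sum_insert he0T, hq_e0, mul_zero, zero_add,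
          ← Finset.sum_coe_sort T (fun f => Aq (ρ t) f * q f)]
        rfl
      rw [← h2]
      have h5 : ∑ f : Fin m, Aq (ρ t) f * q f
          = z e0 * (Aq.mulVec xh (ρ t)) - Aq.mulVec z (ρ t) := by
        show _ = z e0 * (∑ f, Aq (ρ t) f * xh f) - ∑ f, Aq (ρ t) f * z f
        rw [Finset.mul_sum, ← Finset.sum_sub_distrib]
        apply Finset.sum_congr rfl
        intro f _
        rw [hqdef]; ring
      rw [h5, hrow t]
      have h6 : (Aq.mulVec z) (ρ t) = 0 := by rw [hzker]; rfl
      rw [h6]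
      ring
    have hqT : ∀ t : ↥T, q ↑t = 0 := by
      have hzero : (fun t : ↥T => q ↑t) = 0 := by
        by_contra hne
        exact hMdet (Matrix.exists_mulVec_eq_zero_iff.1 ⟨_, hne, hMq⟩)
      intro t
      exact congrFun hzero t
    intro f
    by_cases h1 : f = e0
    · rw [h1]; exact hq_e0
    · by_cases h2 : f ∈ T
      · exact hqT ⟨f, h2⟩
      · exact hq_out f h1 h2
  have hxhz : ∀ f, xh f = (z e0)⁻¹ * z f := by
    intro f
    have h2 : z e0 * xh f = z f := by linarith [hq f]
    rw [← h2, inv_mul_cancel_left₀ hze0]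
  have hxhV : xh ∈ V := by
    have h : xh = (z e0)⁻¹ • z := funext (fun f => hxhz f)
    rw [h]
    exact Submodule.smul_mem _ _ hzV
  have hsupp_iff : ∀ f, xh f ≠ 0 ↔ z f ≠ 0 := by
    intro f
    rw [hxhz f, mul_ne_zero_iff]
    constructor
    · exact fun h => h.2
    · exact fun h => ⟨inv_ne_zero hze0, h⟩
  have hsv : SignVecQ xh := by
    intro f
    by_cases h1 : f = e0
    · right; right; rw [h1, hxh_e0]
    · by_cases h2 : f ∈ T
      · have h3 : xh f = ξ ⟨f, h2⟩ := hxh_T ⟨f, h2⟩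
        have hg' : M.updateCol ⟨f, h2⟩ (fun s => Aq (ρ s) e0)
            = Aq.submatrix ρ (fun s : ↥T => if s = ⟨f, h2⟩ then e0 else ↑s) := by
          ext s u
          rw [Matrix.updateCol_apply, hM]
          by_cases h : u = ⟨f, h2⟩ <;> simp [h, Matrix.submatrix_apply]
        have hbsm : b = (-1 : ℚ) • (fun s : ↥T => Aq (ρ s) e0) := by
          funext s
          rw [hb]
          simp
        have hcr : M.cramer b ⟨f, h2⟩
            = - (Aq.submatrix ρ (fun s : ↥T => if s = ⟨f, h2⟩ then e0 else ↑s)).det := by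
          rw [Matrix.cramer_apply, hbsm, Matrix.det_updateCol_smul, hg']
          ring
        have hTU2 := tu_val hTU ρ (fun s : ↥T => if s = ⟨f, h2⟩ then e0 else ↑s)
        have hξval : ξ ⟨f, h2⟩ = (M.det)⁻¹ * M.cramer b ⟨f, h2⟩ := rfl
        rw [h3, hξval, hcr]
        rcases hd with hd1 | hd1 <;> rcases hTU2 with h5 | h5 | h5 <;> rw [hd1, h5] <;> norm_num
      · right; left; exact hxh_out f h1 h2
  refine ⟨xh, hxhV, trivial, hsv, ?_, ?_, minsupp_congr hsupp_iff hzmin⟩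
  · intro h
    have := congrFun h e0
    rw [hxh_e0] at this
    exact one_ne_zero this
  · intro e he
    exact hzsub e ((hsupp_iff e).1 he)

end BBY
end P6
section P7

open Module Finset

namespace BBY

lemma det_int {κ : Type*} [Fintype κ] [DecidableEq κ] (N : Matrix κ κ ℚ)
    (h : ∀ i j, ∃ a : ℤ, N i j = a) : ∃ a : ℤ, N.det = a := by
  choose Nz hNz using h
  refine ⟨(Matrix.of Nz).det, ?_⟩
  have hN : N = (Int.castRingHom ℚ).mapMatrix (Matrix.of Nz) := by
    ext i j
    exact hNz i j
  rw [hN, ← RingHom.map_det]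
  rfl

lemma tu_entry_int {r m : ℕ} {Aq : Matrix (Fin r) (Fin m) ℚ} (hTU : Aq.IsTotallyUnimodular)
    (i : Fin r) (j : Fin m) : ∃ a : ℤ, Aq i j = a := by
  obtain ⟨s, hs⟩ := hTU.apply i j
  rcases s with _ | _ | _
  · exact ⟨0, by rw [← hs]; rfl⟩
  · exact ⟨-1, by rw [← hs]; norm_num⟩
  · exact ⟨1, by rw [← hs]; rfl⟩

/-- Extraction oracle for the row space of a totally unimodular matrix. -/
lemma HE_row {r m : ℕ} (Aq : Matrix (Fin r) (Fin m) ℚ) (hTU : Aq.IsTotallyUnimodular) :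
    ∀ x ∈ LinearMap.range Aqᵀ.mulVecLin, x ≠ 0 →
    ∃ C, C ∈ LinearMap.range Aqᵀ.mulVecLin ∧
      (∃ yz : Fin r → ℚ, (∀ i, ∃ a : ℤ, yz i = a) ∧ C = Aqᵀ.mulVec yz) ∧
      SignVecQ C ∧ C ≠ 0 ∧
      (∀ e, C e ≠ 0 → x e ≠ 0) ∧ MinSupp (LinearMap.range Aqᵀ.mulVecLin) C := by
  intro x hxV hx0
  set W := LinearMap.range Aqᵀ.mulVecLin with hW
  obtain ⟨z, hzV, hz0, hzsub, hzmin⟩ := exists_minsupp W (fsupp x).card x hxV hx0 le_rfl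
  obtain ⟨y0, hy0⟩ : ∃ y0, Aqᵀ.mulVec y0 = z := hzV
  obtain ⟨e0, he0⟩ := Function.ne_iff.1 hz0
  have hze0 : z e0 ≠ 0 := by simpa using he0
  have he0S : e0 ∈ fsupp z := mem_fsupp.2 hze0
  set Sc : Finset (Fin m) := (fsupp z)ᶜ with hSc
  have hScmem : ∀ f : Fin m, f ∈ Sc ↔ z f = 0 := by
    intro f
    rw [hSc, Finset.mem_compl, mem_fsupp, not_not]
  have hSc0 : ∀ f : ↥Sc, z ↑f = 0 := fun f => (hScmem ↑f).1 f.2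
  -- the linear functional given by pairing with y0
  set φ : (Fin r → ℚ) →ₗ[ℚ] ℚ := dotB (Fin r) y0 with hφ
  have hφcol : ∀ f : Fin m, φ (fun i => Aq i f) = z f := by
    intro f
    show y0 ⬝ᵥ (fun i => Aq i f) = z f
    rw [← hy0]
    show ∑ i, y0 i * Aq i f = ∑ i, Aqᵀ f i * y0 i
    apply Finset.sum_congr rfl
    intro i _
    rw [Matrix.transpose_apply, mul_comm]
  -- independent spanning subfamily of the columns outside the support
  obtain ⟨T0, hT0ind, hT0span⟩ := exists_indep_subfamily
    (fun f : ↥Sc => (fun i => Aq i (↑f : Fin m)))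
  -- the column at e0 is not in the span of the other columns
  have hnospan : (fun i => Aq i e0) ∉ Submodule.span ℚ
      (Set.range (fun t : ↥T0 => (fun i => Aq i (↑(↑t : ↥Sc) : Fin m)))) := by
    intro hmem
    have hle : Submodule.span ℚ
        (Set.range (fun t : ↥T0 => (fun i => Aq i (↑(↑t : ↥Sc) : Fin m)))) ≤ LinearMap.ker φ := by
      rw [Submodule.span_le]
      rintro _ ⟨t, rfl⟩
      have : φ (fun i => Aq i (↑(↑t : ↥Sc) : Fin m)) = 0 := by
        rw [hφcol]
        exact hSc0 ↑t
      exact this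
    have h2 : φ (fun i => Aq i e0) = 0 := hle hmem
    rw [hφcol] at h2
    exact hze0 h2
  -- the extended family over `Option ↥T0` is independent
  set g : Option ↥T0 → Fin m := fun o => o.elim e0 (fun t => ↑(↑t : ↥Sc)) with hg
  have hginj : Function.Injective g := by
    intro a b hab
    match a, b with
    | none, none => rfl
    | none, some t =>
      exfalso
      have hts : z (g (some t)) = 0 := hSc0 ↑t
      rw [← hab] at hts
      exact hze0 hts
    | some t, none =>
      exfalso
      have hts : z (g (some t)) = 0 := hSc0 ↑t
      rw [hab] at hts
      exact hze0 hts
    | some t, some t' =>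
      have h6 : (↑(↑t : ↥Sc) : Fin m) = ↑(↑t' : ↥Sc) := hab
      rw [Subtype.ext (Subtype.ext h6)]
  have hcols : LinearIndependent ℚ (fun o : Option ↥T0 => (fun i => Aq i (g o))) := by
    have heq : (fun o : Option ↥T0 => (fun i => Aq i (g o)))
        = fun o : Option ↥T0 => (Option.elim o (fun i => Aq i e0)
            (fun t => fun i => Aq i (↑(↑t : ↥Sc) : Fin m))) := by
      funext o
      cases o <;> rfl
    rw [heq, linearIndependent_option]
    exact ⟨hT0ind, hnospan⟩
  obtain ⟨ρ, hρinj, hρdet⟩ := exists_nonzero_det_rows (Aq.submatrix id g) hcols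
  set M : Matrix (Option ↥T0) (Option ↥T0) ℚ := Aq.submatrix ρ g with hM
  have hMdet : M.det ≠ 0 := hρdet
  have hd : M.det = 1 ∨ M.det = -1 := by
    rcases tu_val hTU ρ g with h | h | h
    · right; exact h
    · exact absurd h hMdet
    · left; exact h
  have hMtdet : Mᵀ.det = M.det := Matrix.det_transpose M
  set bb : Option ↥T0 → ℚ := Pi.single none 1 with hbb
  set yh : Option ↥T0 → ℚ := (Mᵀ.det)⁻¹ • Mᵀ.cramer bb with hyh
  have hMyh : Mᵀ.mulVec yh = bb := by
    rw [hyh]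
    have h1 : Mᵀ.mulVec ((Mᵀ.det)⁻¹ • Mᵀ.cramer bb) = (Mᵀ.det)⁻¹ • Mᵀ.mulVec (Mᵀ.cramer bb) := by
      rw [Matrix.mulVec_smul]
    rw [h1, Matrix.mulVec_cramer, smul_smul, inv_mul_cancel₀ (by rw [hMtdet]; exact hMdet),
      one_smul]
  -- `yh` has integer entries
  have hyhint : ∀ k, ∃ a : ℤ, yh k = a := by
    intro k
    have h1 : ∃ a : ℤ, (Mᵀ.cramer bb) k = a := by
      rw [Matrix.cramer_apply]
      apply det_int
      intro i j
      by_cases hj : j = k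
      · rw [Matrix.updateCol_apply, if_pos hj, hbb]
        by_cases hi : i = none
        · exact ⟨1, by rw [hi]; simp⟩
        · exact ⟨0, by rw [Pi.single_apply, if_neg hi]; rfl⟩
      · rw [Matrix.updateCol_apply, if_neg hj]
        exact tu_entry_int hTU (ρ j) (g i)
    obtain ⟨a, ha⟩ := h1
    rcases hd with h | h
    · exact ⟨a, by rw [hyh, Pi.smul_apply, smul_eq_mul, hMtdet, h, ha]; norm_num⟩
    · exact ⟨-a, by rw [hyh, Pi.smul_apply, smul_eq_mul, hMtdet, h, ha]; push_cast; ring⟩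
  -- assemble the row-space coefficient vector
  set y : Fin r → ℚ := fun i => ∑ k : Option ↥T0, (if ρ k = i then yh k else 0) with hy
  set D : Fin m → ℚ := Aqᵀ.mulVec y with hD
  have hDW : D ∈ W := ⟨y, rfl⟩
  have hyint : ∀ i, ∃ a : ℤ, y i = a := by
    intro i
    choose az haz using hyhint
    refine ⟨∑ k : Option ↥T0, (if ρ k = i then az k else 0), ?_⟩
    rw [hy]
    push_cast
    apply Finset.sum_congr rfl
    intro k _
    by_cases h : ρ k = i <;> simp [h, haz k]
  have hDval : ∀ f, D f = ∑ k : Option ↥T0, yh k * Aq (ρ k) f := by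
    intro f
    show ∑ i, Aqᵀ f i * y i = _
    have h1 : ∀ i, Aqᵀ f i * y i = ∑ k : Option ↥T0, (if ρ k = i then yh k * Aq i f else 0) := by
      intro i
      rw [hy, Finset.mul_sum]
      apply Finset.sum_congr rfl
      intro k _
      by_cases h : ρ k = i
      · rw [if_pos h, if_pos h, Matrix.transpose_apply, mul_comm]
      · rw [if_neg h, if_neg h, mul_zero]
    rw [Finset.sum_congr rfl (fun i _ => h1 i), Finset.sum_comm]
    apply Finset.sum_congr rfl
    intro k _
    rw [Finset.sum_ite_eq Finset.univ (ρ k) (fun i => yh k * Aq i f)]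
    simp
  have hDcol : ∀ k : Option ↥T0, D (g k) = bb k := by
    intro k
    rw [hDval]
    have h1 : ∀ j : Option ↥T0, yh j * Aq (ρ j) (g k) = Mᵀ k j * yh j := by
      intro j
      rw [Matrix.transpose_apply, hM, Matrix.submatrix_apply, mul_comm]
    rw [Finset.sum_congr rfl (fun j _ => h1 j)]
    exact congrFun hMyh k
  have hDe0 : D e0 = 1 := by
    have := hDcol none
    rw [hbb] at this
    simpa [hg] using this
  -- `D` vanishes outside the support of `z`
  have hDSc : ∀ f : ↥Sc, D (↑f : Fin m) = 0 := by
    intro f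
    -- pairing functional with y
    have hcolmem : (fun i => Aq i (↑f : Fin m)) ∈ Submodule.span ℚ
        (Set.range (fun t : ↥T0 => (fun i => Aq i (↑(↑t : ↥Sc) : Fin m)))) := by
      rw [hT0span]
      exact Submodule.subset_span ⟨f, rfl⟩
    set ψ : (Fin r → ℚ) →ₗ[ℚ] ℚ := dotB (Fin r) y with hψ
    have hψcol : ∀ f' : Fin m, ψ (fun i => Aq i f') = D f' := by
      intro f'
      show y ⬝ᵥ (fun i => Aq i f') = D f'
      show ∑ i, y i * Aq i f' = D f'
      rw [hD]
      show _ = ∑ i, Aqᵀ f' i * y i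
      apply Finset.sum_congr rfl
      intro i _
      rw [Matrix.transpose_apply, mul_comm]
    have hle : Submodule.span ℚ
        (Set.range (fun t : ↥T0 => (fun i => Aq i (↑(↑t : ↥Sc) : Fin m)))) ≤ LinearMap.ker ψ := by
      rw [Submodule.span_le]
      rintro _ ⟨t, rfl⟩
      have h2 : ψ (fun i => Aq i (↑(↑t : ↥Sc) : Fin m)) = 0 := by
        rw [hψcol]
        have h3 := hDcol (some t)
        rw [hbb] at h3
        simpa [hg] using h3
      exact h2
    have h4 : ψ (fun i => Aq i (↑f : Fin m)) = 0 := hle hcolmem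
    rw [hψcol] at h4
    exact h4
  -- q-trick : `z e0 • D = z`
  have hq : ∀ f, z e0 * D f - z f = 0 := by
    set q : Fin m → ℚ := fun f => z e0 * D f - z f with hqdef
    have hqW : q ∈ W := by
      obtain ⟨yD, hyD⟩ : ∃ yD, Aqᵀ.mulVec yD = D := ⟨y, rfl⟩
      refine ⟨z e0 • yD - y0, ?_⟩
      funext f
      show Aqᵀ.mulVec (z e0 • yD - y0) f = z e0 * D f - z f
      rw [Matrix.mulVec_sub, Matrix.mulVec_smul, ← hyD, ← hy0]
      simp [Pi.smul_apply, smul_eq_mul]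
    by_cases hqz : q = 0
    · intro f; exact congrFun hqz f
    · exfalso
      have hqsub : ∀ f, q f ≠ 0 → z f ≠ 0 := by
        intro f hf
        by_contra hzf
        apply hf
        have hfSc : f ∈ Sc := by
          rw [hSc, Finset.mem_compl, mem_fsupp]
          exact fun h => h hzf
        have := hDSc ⟨f, hfSc⟩
        rw [hqdef]
        show z e0 * D f - z f = 0
        rw [this, hzf]
        ring
      have h5 := hzmin q hqW hqz hqsub e0 hze0
      apply h5
      rw [hqdef]
      show z e0 * D e0 - z e0 = 0
      rw [hDe0]
      ring
  have hDz : ∀ f, D f = (z e0)⁻¹ * z f := by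
    intro f
    have h2 : z e0 * D f = z f := by linarith [hq f]
    rw [← h2, inv_mul_cancel_left₀ hze0]
  have hsupp_iff : ∀ f, D f ≠ 0 ↔ z f ≠ 0 := by
    intro f
    rw [hDz f, mul_ne_zero_iff]
    exact ⟨fun h => h.2, fun h => ⟨inv_ne_zero hze0, h⟩⟩
  -- D is a sign vector
  have hsv : SignVecQ D := by
    intro f
    by_cases hzf : z f = 0
    · right; left
      rw [hDz f, hzf, mul_zero]
    · -- f ∈ S : determinant formula
      have hDdet : D f = (M.det)⁻¹ * (M.updateCol none (fun k => Aq (ρ k) f)).det := by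
        rw [hDval]
        have h1 : ∀ k : Option ↥T0, yh k * Aq (ρ k) f
            = (M.det)⁻¹ * (Mᵀ.cramer bb k * Aq (ρ k) f) := by
          intro k
          rw [hyh, Pi.smul_apply, smul_eq_mul, hMtdet]
          ring
        rw [Finset.sum_congr rfl (fun k _ => h1 k), ← Finset.mul_sum]
        congr 1
        have h4 : Mᵀ.cramer bb = Matrix.vecMul bb M.adjugate := by
          rw [Matrix.cramer_eq_adjugate_mulVec, ← Matrix.adjugate_transpose,
            Matrix.mulVec_transpose]
        have h5 : ∑ k, Mᵀ.cramer bb k * Aq (ρ k) f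
            = Matrix.vecMul bb M.adjugate ⬝ᵥ (fun k => Aq (ρ k) f) := by
          rw [h4]; rfl
        rw [h5, ← Matrix.dotProduct_mulVec, ← Matrix.cramer_eq_adjugate_mulVec,
          hbb, single_dotProduct, one_mul, Matrix.cramer_apply]
      have hupd : M.updateCol none (fun k => Aq (ρ k) f)
          = Aq.submatrix ρ (fun k => if k = none then f else g k) := by
        ext s u
        rw [Matrix.updateCol_apply, hM]
        by_cases h : u = none <;> simp [h, Matrix.submatrix_apply]
      have hg'inj : Function.Injective (fun k : Option ↥T0 => if k = none then f else g k) := by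
        intro a b hab
        simp only at hab
        by_cases ha : a = none <;> by_cases hb : b = none
        · rw [ha, hb]
        · exfalso
          rw [ha, if_pos rfl, if_neg hb] at hab
          obtain ⟨t, rfl⟩ := Option.ne_none_iff_exists'.1 hb
          have h6 : z (g (some t)) = 0 := hSc0 _
          have h7 : g (some t) = f := by
            rw [← hab]
          rw [h7] at h6
          exact hzf h6
        · exfalso
          rw [hb, if_pos rfl, if_neg ha] at hab
          obtain ⟨t, rfl⟩ := Option.ne_none_iff_exists'.1 ha
          have h6 : z (g (some t)) = 0 := hSc0 _
          have h7 : g (some t) = f := by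
            rw [hab]
          rw [h7] at h6
          exact hzf h6
        · rw [if_neg ha, if_neg hb] at hab
          exact hginj hab
      have hTU3 := tu_val hTU ρ (fun k : Option ↥T0 => if k = none then f else g k)
      rw [hDdet, hupd]
      rcases hd with h | h <;> rcases hTU3 with h5 | h5 | h5 <;> rw [h, h5] <;> norm_num
  refine ⟨D, hDW, ⟨y, hyint, rfl⟩, hsv, ?_, ?_, minsupp_congr hsupp_iff hzmin⟩
  · intro h
    have := congrFun h e0
    rw [hDe0] at this
    exact one_ne_zero this
  · intro e he
    exact hzsub e ((hsupp_iff e).1 he)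

end BBY
end P7
section P8

open Module Finset

namespace BBY

lemma int_ge_one {q : ℚ} (h : ∃ a : ℤ, q = a) (hq : 0 < q) : 1 ≤ q := by
  obtain ⟨a, rfl⟩ := h
  have h1 : (0 : ℤ) < a := by exact_mod_cast hq
  exact_mod_cast h1

lemma neg_flip {ε q : ℚ} (hε : ε = 1 ∨ ε = -1) (h : ¬ 0 < ε * q) (hq : q ≠ 0) : ε * q < 0 := by
  rcases lt_trichotomy (ε * q) 0 with h1 | h1 | h1
  · exact h1
  · exfalso
    apply hq
    rcases hε with h2 | h2 <;> rw [h2] at h1 <;> linarith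
  · exact absurd h1 h

/-- Main abstract lemma: under the orientation-difference hypotheses, if `u ≠ 0` there
is a minimal sign vector in `V` that is conformal to `u` and compatible with `ε`. -/
lemma abs_main {m : ℕ} (V : Submodule ℚ (Fin m → ℚ)) (Nice : (Fin m → ℚ) → Prop)
    (hN : ∀ C, Nice C → Nice (-C))
    (HE : ∀ x ∈ V, x ≠ 0 → ∃ C, C ∈ V ∧ Nice C ∧ SignVecQ C ∧ C ≠ 0 ∧
       (∀ e, C e ≠ 0 → x e ≠ 0) ∧ MinSupp V C)
    (u v : Fin m → ℚ) (hu : u ∈ V) (hv : v ∈ orth V)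
    (ε : Fin m → ℚ) (hε : ∀ e, ε e = 1 ∨ ε e = -1)
    (hw : ∀ e, ε e * (u e + v e) = 0 ∨ ε e * (u e + v e) = 1)
    (hui : ∀ e, ∃ a : ℤ, u e = a) (hvi : ∀ e, ∃ a : ℤ, v e = a)
    (hu0 : u ≠ 0) :
    ∃ C, C ∈ V ∧ Nice C ∧ SignVecQ C ∧ MinSupp V C ∧ C ≠ 0 ∧
      (∀ e, C e ≠ 0 → C e = ε e) ∧ (∀ e, C e ≠ 0 → 1 ≤ C e * u e) := by
  classical
  set G : Finset (Fin m) := Finset.univ.filter (fun e => 0 < ε e * u e ∨ 0 < ε e * v e) with hG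
  set σ : Fin m → ℚ := fun e => if 0 < ε e * u e then ε e else -ε e with hσ
  have hσs : ∀ e, σ e = 1 ∨ σ e = -1 := by
    intro e
    rw [hσ]
    by_cases h : 0 < ε e * u e
    · simp only [if_pos h]; exact hε e
    · simp only [if_neg h]
      rcases hε e with h1 | h1 <;> rw [h1] <;> norm_num
  have hεu_int : ∀ e, ∃ a : ℤ, ε e * u e = a := by
    intro e
    obtain ⟨a, ha⟩ := hui e
    rcases hε e with h | h
    · exact ⟨a, by rw [h, ha, one_mul]⟩
    · exact ⟨-a, by rw [h, ha]; push_cast; ring⟩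
  have hεv_int : ∀ e, ∃ a : ℤ, ε e * v e = a := by
    intro e
    obtain ⟨a, ha⟩ := hvi e
    rcases hε e with h | h
    · exact ⟨a, by rw [h, ha, one_mul]⟩
    · exact ⟨-a, by rw [h, ha]; push_cast; ring⟩
  have hdisj : ∀ e, ¬(0 < ε e * u e ∧ 0 < ε e * v e) := by
    rintro e ⟨h1, h2⟩
    have g1 := int_ge_one (hεu_int e) h1
    have g2 := int_ge_one (hεv_int e) h2
    rcases hw e with h | h <;> rw [mul_add] at h <;> linarith
  have hPvnz : ∀ e, 0 < ε e * v e → v e ≠ 0 := by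
    intro e h hv0
    rw [hv0, mul_zero] at h
    exact lt_irrefl 0 h
  have hPune : ∃ e, 0 < ε e * u e := by
    have hov : u ⬝ᵥ v = 0 := hv u hu
    have hsum : ∑ e, u e * (u e + v e) = ∑ e, u e * u e := by
      have h1 : ∑ e, u e * (u e + v e) = (∑ e, u e * u e) + ∑ e, u e * v e := by
        rw [← Finset.sum_add_distrib]
        apply Finset.sum_congr rfl
        intro e _
        ring
      have h2 : ∑ e, u e * v e = 0 := hov
      rw [h1, h2, add_zero]
    have hpos : 0 < ∑ e, u e * (u e + v e) := by
      rw [hsum]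
      obtain ⟨e1, he1⟩ := Function.ne_iff.1 hu0
      exact Finset.sum_pos' (fun e _ => mul_self_nonneg (u e))
        ⟨e1, Finset.mem_univ e1, mul_self_pos.2 (by simpa using he1)⟩
    obtain ⟨e, _, he⟩ : ∃ e ∈ Finset.univ, 0 < u e * (u e + v e) := by
      by_contra hall
      push_neg at hall
      have h3 : ∑ e, u e * (u e + v e) ≤ 0 := Finset.sum_nonpos (fun e he' => hall e he')
      linarith
    refine ⟨e, ?_⟩
    rcases hw e with h | h
    · exfalso
      have h4 : u e + v e = 0 := by
        rcases hε e with h1 | h1 <;> rw [h1] at h <;> linarith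
      rw [h4, mul_zero] at he
      exact lt_irrefl 0 he
    · have h2 : u e + v e = ε e := by
        rcases hε e with h1 | h1 <;> rw [h1] at h ⊢ <;> linarith
      rw [h2, mul_comm] at he
      exact he
  obtain ⟨xx, hxV, zz, hzW, hxZ, hxG, hzG, hpos⟩ := tucker V σ hσs G
  -- xx vanishes wherever v is nonzero
  have hxv : ∀ e, v e ≠ 0 → xx e = 0 := by
    have hdot : ∑ e, xx e * v e = 0 := hv xx hxV
    have hterm : ∀ e ∈ Finset.univ, xx e * v e ≤ 0 := by
      intro e _
      by_cases hve : v e = 0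
      · rw [hve, mul_zero]
      · have h4 : xx e * v e = (ε e * xx e) * (ε e * v e) := (sq_one_mul (hε e)).symm
        by_cases hPv : 0 < ε e * v e
        · have heG : e ∈ G := Finset.mem_filter.2 ⟨Finset.mem_univ e, Or.inr hPv⟩
          have hnPu : ¬ 0 < ε e * u e := fun h => hdisj e ⟨h, hPv⟩
          have hσe : σ e = -ε e := by rw [hσ]; simp only [if_neg hnPu]
          have h3 := hxG e heG
          rw [hσe, neg_mul] at h3
          rw [h4]
          exact mul_nonpos_of_nonpos_of_nonneg (by linarith) (le_of_lt hPv)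
        · have hεvneg : ε e * v e < 0 := neg_flip (hε e) hPv hve
          have hPu : 0 < ε e * u e := by
            rcases hw e with h | h <;> rw [mul_add] at h <;> linarith
          have heG : e ∈ G := Finset.mem_filter.2 ⟨Finset.mem_univ e, Or.inl hPu⟩
          have hσe : σ e = ε e := by rw [hσ]; simp only [if_pos hPu]
          have h3 := hxG e heG
          rw [hσe] at h3
          rw [h4]
          exact mul_nonpos_of_nonneg_of_nonpos h3 (le_of_lt hεvneg)
    intro e hve
    have h5 := (Finset.sum_eq_zero_iff_of_nonpos hterm).1 hdot e (Finset.mem_univ e)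
    rcases mul_eq_zero.1 h5 with h | h
    · exact h
    · exact absurd h hve
  -- xx is nonzero
  have hx0 : xx ≠ 0 := by
    intro hxx0
    obtain ⟨e1, he1⟩ := hPune
    have hzpos : ∀ e ∈ G, 0 < σ e * zz e := by
      intro e he
      have h6 := hpos e he
      rw [hxx0] at h6
      simpa using h6
    have hdot : ∑ e, u e * zz e = 0 := hzW u hu
    have hterm : ∀ e ∈ Finset.univ, 0 ≤ u e * zz e := by
      intro e _
      by_cases hue : u e = 0
      · rw [hue, zero_mul]
      · have h4 : u e * zz e = (ε e * u e) * (ε e * zz e) := (sq_one_mul (hε e)).symm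
        by_cases hPu : 0 < ε e * u e
        · have heG : e ∈ G := Finset.mem_filter.2 ⟨Finset.mem_univ e, Or.inl hPu⟩
          have hσe : σ e = ε e := by rw [hσ]; simp only [if_pos hPu]
          have h3 := hzpos e heG
          rw [hσe] at h3
          rw [h4]
          exact mul_nonneg (le_of_lt hPu) (le_of_lt h3)
        · have hεuneg : ε e * u e < 0 := neg_flip (hε e) hPu hue
          have hPv : 0 < ε e * v e := by
            rcases hw e with h | h <;> rw [mul_add] at h <;> linarith
          have heG : e ∈ G := Finset.mem_filter.2 ⟨Finset.mem_univ e, Or.inr hPv⟩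
          have hnPu : ¬ 0 < ε e * u e := hPu
          have hσe : σ e = -ε e := by rw [hσ]; simp only [if_neg hnPu]
          have h3 := hzpos e heG
          rw [hσe, neg_mul] at h3
          rw [h4]
          nlinarith [mul_pos (show (0:ℚ) < -(ε e * u e) by linarith) h3]
    have h5 : 0 < u e1 * zz e1 := by
      have heG : e1 ∈ G := Finset.mem_filter.2 ⟨Finset.mem_univ e1, Or.inl he1⟩
      have hσe : σ e1 = ε e1 := by rw [hσ]; simp only [if_pos he1]
      have h3 := hzpos e1 heG
      rw [hσe] at h3
      have h4 : u e1 * zz e1 = (ε e1 * u e1) * (ε e1 * zz e1) := (sq_one_mul (hε e1)).symm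
      rw [h4]
      exact mul_pos he1 h3
    have h6 : 0 < ∑ e, u e * zz e :=
      Finset.sum_pos' hterm ⟨e1, Finset.mem_univ e1, h5⟩
    rw [hdot] at h6
    exact lt_irrefl 0 h6
  obtain ⟨i, hi⟩ := Function.ne_iff.1 hx0
  obtain ⟨C, hCV, hCN, hCS, hCmin, hCi, hCconf⟩ :=
    conf_through V Nice hN HE (fsupp xx).card xx hxV le_rfl i (by simpa using hi)
  have hsupp : ∀ e, C e ≠ 0 → (0 < ε e * u e ∧ C e = ε e) := by
    intro e hCe
    have h1 := hCconf e hCe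
    have hxe : xx e ≠ 0 := by
      intro h
      rw [h, mul_zero] at h1
      exact lt_irrefl 0 h1
    have hve : v e = 0 := by
      by_contra hve
      exact hxe (hxv e hve)
    have heG : e ∈ G := by
      by_contra heG
      exact hxe (hxZ e heG)
    have hPu : 0 < ε e * u e := by
      rcases (Finset.mem_filter.1 heG).2 with h | h
      · exact h
      · exfalso
        rw [hve, mul_zero] at h
        exact lt_irrefl 0 h
    have hσe : σ e = ε e := by rw [hσ]; simp only [if_pos hPu]
    have hεx : 0 < ε e * xx e := by
      have h3 := hxG e heG
      rw [hσe] at h3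
      rcases lt_or_eq_of_le h3 with h4 | h4
      · exact h4
      · exfalso
        apply hxe
        rcases hε e with h5 | h5 <;> rw [h5] at h4 <;> linarith
    have hCε : C e = ε e := by
      rcases hCS e with h | h | h
      · rcases hε e with h2 | h2
        · exfalso
          rw [h] at h1
          rw [h2] at hεx
          nlinarith
        · rw [h, h2]
      · exact absurd h hCe
      · rcases hε e with h2 | h2
        · rw [h, h2]
        · exfalso
          rw [h] at h1
          rw [h2] at hεx
          nlinarith
    exact ⟨hPu, hCε⟩
  refine ⟨C, hCV, hCN, hCS, hCmin, fun h => hCi (congrFun h i), fun e h => (hsupp e h).2, ?_⟩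
  intro e h
  obtain ⟨h1, h2⟩ := hsupp e h
  rw [h2]
  exact int_ge_one (hεu_int e) h1

end BBY
end P8
section P9

open Module Finset

namespace BBY

variable {r m : ℕ}

/-- Componentwise cast of an integer vector. -/
def castv {k : ℕ} (u : Fin k → ℤ) : Fin k → ℚ := fun e => (u e : ℚ)

lemma castv_ne_zero {k : ℕ} {u : Fin k → ℤ} (h : u ≠ 0) : castv u ≠ 0 := by
  obtain ⟨e, he⟩ := Function.ne_iff.1 h
  intro hc
  apply he
  have h1 : (u e : ℚ) = 0 := congrFun hc e
  exact_mod_cast h1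

lemma tu_cast {A : Matrix (Fin r) (Fin m) ℤ} (hTU : A.IsTotallyUnimodular) :
    (A.map ((↑) : ℤ → ℚ)).IsTotallyUnimodular := by
  rw [Matrix.isTotallyUnimodular_iff]
  intro k f g
  have h1 : (A.map ((↑) : ℤ → ℚ)).submatrix f g = (Int.castRingHom ℚ).mapMatrix (A.submatrix f g) := by
    ext i j
    rfl
  rw [h1, ← RingHom.map_det]
  obtain ⟨s, hs⟩ := (Matrix.isTotallyUnimodular_iff A).1 hTU k f g
  refine ⟨s, ?_⟩
  rw [← hs]
  rcases s with _ | _ | _ <;> norm_num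

lemma cast_mulVec (A : Matrix (Fin r) (Fin m) ℤ) (u : Fin m → ℤ) (i : Fin r) :
    (A.map ((↑) : ℤ → ℚ)).mulVec (castv u) i = ((A.mulVec u i : ℤ) : ℚ) := by
  show ∑ j, (A i j : ℚ) * (u j : ℚ) = ((∑ j, A i j * u j : ℤ) : ℚ)
  push_cast
  rfl

lemma cast_ker {A : Matrix (Fin r) (Fin m) ℤ} {u : Fin m → ℤ} (h : A.mulVec u = 0) :
    castv u ∈ LinearMap.ker (A.map ((↑) : ℤ → ℚ)).mulVecLin := by
  show (A.map ((↑) : ℤ → ℚ)).mulVec (castv u) = 0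
  funext i
  rw [cast_mulVec, congrFun h i]
  rfl

lemma cast_row (A : Matrix (Fin r) (Fin m) ℤ) (y : Fin r → ℤ) :
    castv (Matrix.vecMul y A) = (A.map ((↑) : ℤ → ℚ))ᵀ.mulVec (castv y) := by
  funext f
  show ((∑ i, y i * A i f : ℤ) : ℚ) = ∑ i, (A i f : ℚ) * (y i : ℚ)
  push_cast
  apply Finset.sum_congr rfl
  intro i _
  ring

/-- Conversion of a rational minimal sign vector in the kernel to an integer circuit. -/
lemma to_circuit {A : Matrix (Fin r) (Fin m) ℤ} {C : Fin m → ℚ}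
    (hCV : C ∈ LinearMap.ker (A.map ((↑) : ℤ → ℚ)).mulVecLin)
    (hCS : SignVecQ C) (hC0 : C ≠ 0)
    (hCmin : MinSupp (LinearMap.ker (A.map ((↑) : ℤ → ℚ)).mulVecLin) C) :
    ∃ Cz : Fin m → ℤ, castv Cz = C ∧ IsCircuit A Cz := by
  set Cz : Fin m → ℤ := fun e => if C e = 1 then 1 else if C e = -1 then -1 else 0 with hCz
  have hcast : castv Cz = C := by
    funext e
    rcases hCS e with h | h | h <;> rw [castv, hCz] <;> simp [h] <;> try norm_num
  have hsuppz : ∀ e, Cz e ≠ 0 ↔ C e ≠ 0 := by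
    intro e
    rw [← hcast]
    constructor
    · intro h hc
      apply h
      have : (Cz e : ℚ) = 0 := hc
      exact_mod_cast this
    · intro h hc
      apply h
      rw [castv, hc]
      rfl
  refine ⟨Cz, hcast, ?_, ?_, ?_, ?_⟩
  · -- SignVec
    intro e
    rw [hCz]
    rcases hCS e with h | h | h <;> simp [h] <;> try norm_num
  · -- nonzero
    intro h
    apply hC0
    rw [← hcast, h]
    funext e
    rfl
  · -- kernel
    have hker : (A.map ((↑) : ℤ → ℚ)).mulVec C = 0 := hCV
    funext i
    have h1 := congrFun hker i
    rw [← hcast, cast_mulVec] at h1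
    have h2 : ((A.mulVec Cz i : ℤ) : ℚ) = 0 := h1
    exact_mod_cast h2
  · -- minimality
    intro v hv0 hvker hsub
    have hvV : castv v ∈ LinearMap.ker (A.map ((↑) : ℤ → ℚ)).mulVecLin := cast_ker hvker
    have h3 := hCmin (castv v) hvV (castv_ne_zero hv0)
      (fun e he => by
        have hvz : v e ≠ 0 := by
          intro h
          apply he
          rw [castv, h]
          rfl
        have h4 : e ∈ {e | v e ≠ 0} := hvz
        have h5 := hsub h4
        exact (hsuppz e).1 h5)
    ext e
    constructor
    · intro he
      exact hsub he
    · intro he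
      have h6 : C e ≠ 0 := (hsuppz e).1 he
      have h7 := h3 e h6
      show v e ≠ 0
      intro h
      apply h7
      rw [castv, h]
      rfl

/-- Conversion of a rational minimal sign vector in the row space to an integer cocircuit. -/
lemma to_cocircuit {A : Matrix (Fin r) (Fin m) ℤ} {C : Fin m → ℚ}
    (hNice : ∃ yz : Fin r → ℚ, (∀ i, ∃ a : ℤ, yz i = a) ∧ C = (A.map ((↑) : ℤ → ℚ))ᵀ.mulVec yz)
    (hCS : SignVecQ C) (hC0 : C ≠ 0)
    (hCmin : MinSupp (LinearMap.range (A.map ((↑) : ℤ → ℚ))ᵀ.mulVecLin) C) :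
    ∃ Cz : Fin m → ℤ, castv Cz = C ∧ IsCocircuit A Cz := by
  set Cz : Fin m → ℤ := fun e => if C e = 1 then 1 else if C e = -1 then -1 else 0 with hCz
  have hcast : castv Cz = C := by
    funext e
    rcases hCS e with h | h | h <;> rw [castv, hCz] <;> simp [h] <;> try norm_num
  have hsuppz : ∀ e, Cz e ≠ 0 ↔ C e ≠ 0 := by
    intro e
    rw [← hcast]
    constructor
    · intro h hc
      apply h
      have : (Cz e : ℚ) = 0 := hc
      exact_mod_cast this
    · intro h hc
      apply h
      rw [castv, hc]
      rfl
  obtain ⟨yz, hyzint, hyzC⟩ := hNice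
  choose ya hya using hyzint
  have hyzcast : yz = castv ya := by
    funext i
    rw [castv, hya i]
  refine ⟨Cz, hcast, ?_, ?_, ⟨ya, ?_⟩, ?_⟩
  · intro e
    rw [hCz]
    rcases hCS e with h | h | h <;> simp [h] <;> try norm_num
  · intro h
    apply hC0
    rw [← hcast, h]
    funext e
    rfl
  · -- Cz = vecMul ya A
    have h1 : castv (Matrix.vecMul ya A) = C := by
      rw [cast_row, ← hyzcast, ← hyzC]
    funext e
    have h2 := congrFun h1 e
    rw [← hcast] at h2
    have h3 : ((Matrix.vecMul ya A) e : ℚ) = (Cz e : ℚ) := h2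
    exact_mod_cast h3.symm
  · -- minimality
    intro v hv0 hvrow hsub
    obtain ⟨y', hy'⟩ := hvrow
    have hvW : castv v ∈ LinearMap.range (A.map ((↑) : ℤ → ℚ))ᵀ.mulVecLin := by
      refine ⟨castv y', ?_⟩
      show (A.map ((↑) : ℤ → ℚ))ᵀ.mulVec (castv y') = castv v
      rw [← cast_row, hy']
    have h3 := hCmin (castv v) hvW (castv_ne_zero hv0)
      (fun e he => by
        have hvz : v e ≠ 0 := by
          intro h
          apply he
          rw [castv, h]
          rfl
        exact (hsuppz e).1 (hsub hvz))
    ext e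
    constructor
    · intro he
      exact hsub he
    · intro he
      have h6 : C e ≠ 0 := (hsuppz e).1 he
      have h7 := h3 e h6
      show v e ≠ 0
      intro h
      apply h7
      rw [castv, h]
      rfl

lemma orient_cases {O O' : Fin m → ℤ} (hO : IsOrientation O) (hO' : IsOrientation O')
    {u v : Fin m → ℤ} (hdiff : ∀ e, O e - O' e = 2 * (u e + v e)) (e : Fin m) :
    O e * (u e + v e) = 0 ∨ O e * (u e + v e) = 1 := by
  have h := hdiff e
  rcases hO e with h1 | h1 <;> rcases hO' e with h2 | h2 <;> rw [h1, h2] at h <;> rw [h1] <;> omega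

/-- Existence of a circuit reversal step when the kernel part is nonzero. -/
lemma lemC {A : Matrix (Fin r) (Fin m) ℤ} (hTU : A.IsTotallyUnimodular)
    {O O' u v : Fin m → ℤ} (hO : IsOrientation O) (hO' : IsOrientation O')
    (hAu : A.mulVec u = 0) (hv : ∃ y, v = Matrix.vecMul y A)
    (hdiff : ∀ e, O e - O' e = 2 * (u e + v e)) (hu0 : u ≠ 0) :
    ∃ C : Fin m → ℤ, IsCircuit A C ∧ (∀ e, C e ≠ 0 → C e = O e) ∧
      (∀ e, C e ≠ 0 → 1 ≤ C e * u e) := by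
  set Aq := A.map ((↑) : ℤ → ℚ) with hAq
  have hTUq := tu_cast hTU
  obtain ⟨y, rfl⟩ := hv
  have hvW : castv (Matrix.vecMul y A) ∈ orth (LinearMap.ker Aq.mulVecLin) := by
    rw [orth_ker]
    exact ⟨castv y, (cast_row A y).symm⟩
  have hε : ∀ e, castv O e = 1 ∨ castv O e = -1 := by
    intro e
    rcases hO e with h | h <;> rw [castv, h] <;> norm_num
  have hw : ∀ e, castv O e * (castv u e + castv (Matrix.vecMul y A) e) = 0 ∨
      castv O e * (castv u e + castv (Matrix.vecMul y A) e) = 1 := by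
    intro e
    rcases orient_cases hO hO' hdiff e with h | h
    · left
      rw [castv, castv, castv]
      push_cast
      exact_mod_cast congrArg (fun t : ℤ => (t : ℚ)) h
    · right
      rw [castv, castv, castv]
      push_cast
      exact_mod_cast congrArg (fun t : ℤ => (t : ℚ)) h
  obtain ⟨C, hCV, _, hCS, hCmin, hC0, hCcomp, hCconf⟩ :=
    abs_main (LinearMap.ker Aq.mulVecLin) (fun _ => True) (fun _ _ => trivial)
      (HE_ker Aq hTUq) (castv u) (castv (Matrix.vecMul y A)) (cast_ker hAu) hvW
      (castv O) hε hw (fun e => ⟨u e, rfl⟩) (fun e => ⟨Matrix.vecMul y A e, rfl⟩)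
      (castv_ne_zero hu0)
  obtain ⟨Cz, hcast, hcirc⟩ := to_circuit hCV hCS hC0 hCmin
  refine ⟨Cz, hcirc, ?_, ?_⟩
  · intro e he
    have hne : C e ≠ 0 := by
      rw [← hcast]
      intro h
      exact he (by exact_mod_cast (show (Cz e : ℚ) = 0 from h))
    have h1 := hCcomp e hne
    rw [← hcast] at h1
    have h2 : (Cz e : ℚ) = (O e : ℚ) := h1
    exact_mod_cast h2
  · intro e he
    have hne : C e ≠ 0 := by
      rw [← hcast]
      intro h
      exact he (by exact_mod_cast (show (Cz e : ℚ) = 0 from h))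
    have h2 := hCconf e hne
    rw [← hcast] at h2
    have h3 : (1 : ℚ) ≤ ((Cz e * u e : ℤ) : ℚ) := by
      push_cast
      exact h2
    exact_mod_cast h3

/-- Existence of a cocircuit reversal step when the row part is nonzero. -/
lemma lemD {A : Matrix (Fin r) (Fin m) ℤ} (hTU : A.IsTotallyUnimodular)
    {O O' u v : Fin m → ℤ} (hO : IsOrientation O) (hO' : IsOrientation O')
    (hAu : A.mulVec u = 0) (hv : ∃ y, v = Matrix.vecMul y A)
    (hdiff : ∀ e, O e - O' e = 2 * (u e + v e)) (hv0 : v ≠ 0) :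
    ∃ C : Fin m → ℤ, IsCocircuit A C ∧ (∀ e, C e ≠ 0 → C e = O e) ∧
      (∀ e, C e ≠ 0 → 1 ≤ C e * v e) := by
  set Aq := A.map ((↑) : ℤ → ℚ) with hAq
  have hTUq := tu_cast hTU
  obtain ⟨y, rfl⟩ := hv
  have hvW : castv (Matrix.vecMul y A) ∈ LinearMap.range Aqᵀ.mulVecLin :=
    ⟨castv y, (cast_row A y).symm⟩
  have huK : castv u ∈ orth (LinearMap.range Aqᵀ.mulVecLin) := by
    rw [orth_range]
    exact cast_ker hAu
  have hε : ∀ e, castv O e = 1 ∨ castv O e = -1 := by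
    intro e
    rcases hO e with h | h <;> rw [castv, h] <;> norm_num
  have hw : ∀ e, castv O e * (castv (Matrix.vecMul y A) e + castv u e) = 0 ∨
      castv O e * (castv (Matrix.vecMul y A) e + castv u e) = 1 := by
    intro e
    have hoc' : O e * (Matrix.vecMul y A e + u e) = 0 ∨
        O e * (Matrix.vecMul y A e + u e) = 1 := by
      have hcomm : O e * (Matrix.vecMul y A e + u e) = O e * (u e + Matrix.vecMul y A e) := by
        ring
      rw [hcomm]
      exact orient_cases hO hO' hdiff e
    rcases hoc' with h | h
    · left
      rw [castv, castv, castv]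
      have h2 : ((O e * (Matrix.vecMul y A e + u e) : ℤ) : ℚ) = 0 := by rw [h]; rfl
      push_cast at h2
      exact h2
    · right
      rw [castv, castv, castv]
      have h2 : ((O e * (Matrix.vecMul y A e + u e) : ℤ) : ℚ) = 1 := by rw [h]; rfl
      push_cast at h2
      exact h2
  have hNiceNeg : ∀ C : Fin m → ℚ,
      (∃ yz : Fin r → ℚ, (∀ i, ∃ a : ℤ, yz i = a) ∧ C = Aqᵀ.mulVec yz) →
      (∃ yz : Fin r → ℚ, (∀ i, ∃ a : ℤ, yz i = a) ∧ -C = Aqᵀ.mulVec yz) := by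
    rintro C ⟨yz, hint, rfl⟩
    refine ⟨-yz, ?_, ?_⟩
    · intro i
      obtain ⟨a, ha⟩ := hint i
      exact ⟨-a, by rw [Pi.neg_apply, ha]; push_cast; ring⟩
    · rw [Matrix.mulVec_neg]
  obtain ⟨C, hCV, hCN, hCS, hCmin, hC0, hCcomp, hCconf⟩ :=
    abs_main (LinearMap.range Aqᵀ.mulVecLin)
      (fun C => ∃ yz : Fin r → ℚ, (∀ i, ∃ a : ℤ, yz i = a) ∧ C = Aqᵀ.mulVec yz)
      hNiceNeg (HE_row Aq hTUq) (castv (Matrix.vecMul y A)) (castv u) hvW huK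
      (castv O) hε hw (fun e => ⟨Matrix.vecMul y A e, rfl⟩) (fun e => ⟨u e, rfl⟩)
      (castv_ne_zero hv0)
  obtain ⟨Cz, hcast, hcoc⟩ := to_cocircuit hCN hCS hC0 hCmin
  refine ⟨Cz, hcoc, ?_, ?_⟩
  · intro e he
    have hne : C e ≠ 0 := by
      rw [← hcast]
      intro h
      exact he (by exact_mod_cast (show (Cz e : ℚ) = 0 from h))
    have h1 := hCcomp e hne
    rw [← hcast] at h1
    have h2 : (Cz e : ℚ) = (O e : ℚ) := h1
    exact_mod_cast h2
  · intro e he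
    have hne : C e ≠ 0 := by
      rw [← hcast]
      intro h
      exact he (by exact_mod_cast (show (Cz e : ℚ) = 0 from h))
    have h2 := hCconf e hne
    rw [← hcast] at h2
    have h3 : (1 : ℚ) ≤ ((Cz e * Matrix.vecMul y A e : ℤ) : ℚ) := by
      push_cast
      exact h2
    exact_mod_cast h3

end BBY
end P9
section P10

open Module Finset

namespace BBY

lemma comp_of_conf {m : ℕ} {ε xx C : Fin m → ℚ} (hε : ∀ e, ε e = 1 ∨ ε e = -1)
    (hCS : SignVecQ C) (hx : ∀ e, 0 ≤ ε e * xx e)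
    (hconf : ∀ e, C e ≠ 0 → 0 < C e * xx e) : ∀ e, C e ≠ 0 → C e = ε e := by
  intro e hCe
  have h1 := hconf e hCe
  have hxe : xx e ≠ 0 := by
    intro h
    rw [h, mul_zero] at h1
    exact lt_irrefl 0 h1
  have hεe : ε e ≠ 0 := by rcases hε e with h | h <;> rw [h] <;> norm_num
  have hεx : 0 < ε e * xx e := lt_of_le_of_ne (hx e) (Ne.symm (mul_ne_zero hεe hxe))
  rcases hCS e with h | h | h
  · rcases hε e with h2 | h2
    · exfalso
      rw [h] at h1
      rw [h2] at hεx
      nlinarith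
    · rw [h, h2]
  · exact absurd h hCe
  · rcases hε e with h2 | h2
    · rw [h, h2]
    · exfalso
      rw [h] at h1
      rw [h2] at hεx
      nlinarith

lemma compz {m : ℕ} {C : Fin m → ℚ} {Cz O : Fin m → ℤ} (hcast : castv Cz = C)
    (h : ∀ e, C e ≠ 0 → C e = castv O e) : ∀ e, Cz e ≠ 0 → Cz e = O e := by
  intro e he
  have hne : C e ≠ 0 := by
    rw [← hcast]
    intro hc
    exact he (by exact_mod_cast (show (Cz e : ℚ) = 0 from hc))
  have h1 := h e hne
  rw [← hcast] at h1
  have h2 : (Cz e : ℚ) = (O e : ℚ) := h1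
  exact_mod_cast h2

/-- Minty's lemma: every element lies in a compatible circuit or compatible cocircuit. -/
lemma minty {r m : ℕ} {A : Matrix (Fin r) (Fin m) ℤ} (hTU : A.IsTotallyUnimodular)
    {O : Fin m → ℤ} (hO : IsOrientation O) (i : Fin m) :
    ∃ C : Fin m → ℤ, (IsCircuit A C ∨ IsCocircuit A C) ∧
      (∀ e, C e ≠ 0 → C e = O e) ∧ C i ≠ 0 := by
  set Aq := A.map ((↑) : ℤ → ℚ) with hAq
  have hTUq := tu_cast hTU
  have hε : ∀ e, castv O e = 1 ∨ castv O e = -1 := by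
    intro e
    rcases hO e with h | h <;> rw [castv, h] <;> norm_num
  obtain ⟨xx, hxV, zz, hzW, hxZ, hxG, hzG, hpos⟩ :=
    tucker (LinearMap.ker Aq.mulVecLin) (castv O) hε Finset.univ
  have hx' : ∀ e, 0 ≤ castv O e * xx e := fun e => hxG e (Finset.mem_univ e)
  have hz' : ∀ e, 0 ≤ castv O e * zz e := fun e => hzG e (Finset.mem_univ e)
  have hior : 0 < castv O i * xx i ∨ 0 < castv O i * zz i := by
    have h3 := hpos i (Finset.mem_univ i)
    rw [mul_add] at h3
    by_contra hc
    push_neg at hc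
    obtain ⟨h4, h5⟩ := hc
    linarith [hx' i, hz' i]
  rcases hior with hxi | hzi
  · have hxine : xx i ≠ 0 := by
      intro h
      rw [h, mul_zero] at hxi
      exact lt_irrefl 0 hxi
    obtain ⟨C, hCV, _, hCS, hCmin, hCi, hCconf⟩ :=
      conf_through (LinearMap.ker Aq.mulVecLin) (fun _ => True) (fun _ _ => trivial)
        (HE_ker Aq hTUq) (fsupp xx).card xx hxV le_rfl i hxine
    have hcomp := comp_of_conf hε hCS hx' hCconf
    obtain ⟨Cz, hcast, hcirc⟩ := to_circuit hCV hCS (fun h => hCi (congrFun h i)) hCmin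
    refine ⟨Cz, Or.inl hcirc, compz hcast hcomp, ?_⟩
    intro h
    apply hCi
    rw [← hcast, castv, h]
    rfl
  · have hzine : zz i ≠ 0 := by
      intro h
      rw [h, mul_zero] at hzi
      exact lt_irrefl 0 hzi
    have hzWr : zz ∈ LinearMap.range Aqᵀ.mulVecLin := by
      rw [← orth_ker Aq]
      exact hzW
    have hNiceNeg : ∀ C : Fin m → ℚ,
        (∃ yz : Fin r → ℚ, (∀ j, ∃ a : ℤ, yz j = a) ∧ C = Aqᵀ.mulVec yz) →
        (∃ yz : Fin r → ℚ, (∀ j, ∃ a : ℤ, yz j = a) ∧ -C = Aqᵀ.mulVec yz) := by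
      rintro C ⟨yz, hint, rfl⟩
      refine ⟨-yz, ?_, by rw [Matrix.mulVec_neg]⟩
      intro j
      obtain ⟨a, ha⟩ := hint j
      exact ⟨-a, by rw [Pi.neg_apply, ha]; push_cast; ring⟩
    obtain ⟨C, hCV, hCN, hCS, hCmin, hCi, hCconf⟩ :=
      conf_through (LinearMap.range Aqᵀ.mulVecLin)
        (fun C => ∃ yz : Fin r → ℚ, (∀ j, ∃ a : ℤ, yz j = a) ∧ C = Aqᵀ.mulVec yz)
        hNiceNeg (HE_row Aq hTUq) (fsupp zz).card zz hzWr le_rfl i hzine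
    have hcomp := comp_of_conf hε hCS hz' hCconf
    obtain ⟨Cz, hcast, hcoc⟩ := to_cocircuit hCN hCS (fun h => hCi (congrFun h i)) hCmin
    refine ⟨Cz, Or.inr hcoc, compz hcast hcomp, ?_⟩
    intro h
    apply hCi
    rw [← hcast, castv, h]
    rfl

/-- Backward direction: lattice relation implies reversal equivalence. -/
lemma main_equiv {r m : ℕ} {A : Matrix (Fin r) (Fin m) ℤ} (hTU : A.IsTotallyUnimodular) :
    ∀ (n : ℕ) (O O' u v : Fin m → ℤ),
    IsOrientation O → IsOrientation O' → A.mulVec u = 0 → (∃ y, v = Matrix.vecMul y A) →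
    (∀ e, O e - O' e = 2 * (u e + v e)) → (∑ e, (u e ^ 2 + v e ^ 2)) ≤ (n : ℤ) →
    CCEquiv A O O' := by
  intro n
  induction n with
  | zero =>
    intro O O' u v hO hO' hu hv hdiff hΦ
    have hzero : ∀ e, u e = 0 ∧ v e = 0 := by
      intro e
      have h2 : ∀ f ∈ Finset.univ, (0 : ℤ) ≤ u f ^ 2 + v f ^ 2 := by
        intro f _
        positivity
      have h3 : u e ^ 2 + v e ^ 2 ≤ ∑ f, (u f ^ 2 + v f ^ 2) :=
        Finset.single_le_sum h2 (Finset.mem_univ e)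
      have h7 : u e ^ 2 + v e ^ 2 ≤ 0 := le_trans h3 (by exact_mod_cast hΦ)
      constructor
      · by_contra hne
        have h8 : 1 ≤ u e ^ 2 := by rcases lt_or_gt_of_ne hne with h | h <;> nlinarith
        nlinarith [sq_nonneg (v e)]
      · by_contra hne
        have h8 : 1 ≤ v e ^ 2 := by rcases lt_or_gt_of_ne hne with h | h <;> nlinarith
        nlinarith [sq_nonneg (u e)]
    have hOO : O = O' := by
      funext e
      have h4 := hdiff e
      rw [(hzero e).1, (hzero e).2] at h4
      omega
    rw [hOO]
    exact Relation.EqvGen.refl O'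
  | succ n IH =>
    intro O O' u v hO hO' hu hv hdiff hΦ
    by_cases hu0 : u = 0
    · by_cases hv0 : v = 0
      · have hOO : O = O' := by
          funext e
          have h4 := hdiff e
          rw [hu0, hv0] at h4
          simp at h4
          omega
        rw [hOO]
        exact Relation.EqvGen.refl O'
      · -- cocircuit reversal step
        obtain ⟨C, hC, hCcomp, hCconf⟩ := lemD hTU hO hO' hu hv hdiff hv0
        obtain ⟨hCS, hC0, hCrow, hCmin4⟩ := hC
        set O₁ : Fin m → ℤ := fun e => O e - 2 * C e with hO₁def
        have hO₁ : IsOrientation O₁ := by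
          intro e
          have hr : O₁ e = O e - 2 * C e := rfl
          by_cases h : C e = 0
          · rcases hO e with h3 | h3 <;> omega
          · have h2 := hCcomp e h
            rcases hO e with h3 | h3 <;> omega
        have hrev : CCReversal A O O₁ := by
          refine ⟨C, Or.inr ⟨hCS, hC0, hCrow, hCmin4⟩, fun e he => (hCcomp e he).symm, ?_, ?_⟩
          · intro e he
            have hr : O₁ e = O e - 2 * C e := rfl
            have h2 := hCcomp e he
            omega
          · intro e he
            have hr : O₁ e = O e - 2 * C e := rfl
            omega
        obtain ⟨y, hy⟩ := hv
        obtain ⟨yC, hyC⟩ := hCrow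
        have hv₁ : ∃ y₁, (fun e => v e - C e) = Matrix.vecMul y₁ A := by
          refine ⟨y - yC, ?_⟩
          funext e
          rw [Matrix.sub_vecMul]
          show v e - C e = Matrix.vecMul y A e - Matrix.vecMul yC A e
          rw [← hy, ← hyC]
        have hdiff₁ : ∀ e, O₁ e - O' e = 2 * (u e + (v e - C e)) := by
          intro e
          have hr : O₁ e = O e - 2 * C e := rfl
          have h4 := hdiff e
          omega
        have hdec : (∑ e, (u e ^ 2 + (v e - C e) ^ 2)) < ∑ e, (u e ^ 2 + v e ^ 2) := by
          apply Finset.sum_lt_sum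
          · intro e _
            by_cases h : C e = 0
            · rw [h]; ring_nf; rfl
            · have h1 := hCconf e h
              rcases hCS e with h3 | h3 | h3
              · nlinarith
              · exact absurd h3 h
              · nlinarith
          · obtain ⟨e0, he0⟩ := Function.ne_iff.1 hC0
            refine ⟨e0, Finset.mem_univ e0, ?_⟩
            have he0' : C e0 ≠ 0 := by simpa using he0
            have h1 := hCconf e0 he0'
            rcases hCS e0 with h3 | h3 | h3
            · nlinarith
            · exact absurd h3 he0'
            · nlinarith
        have hΦ₁ : (∑ e, (u e ^ 2 + (v e - C e) ^ 2)) ≤ (n : ℤ) := by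
          have h5 := Int.lt_iff_add_one_le.1 hdec
          push_cast at hΦ
          linarith
        exact Relation.EqvGen.trans _ _ _ (Relation.EqvGen.rel _ _ hrev)
          (IH O₁ O' u (fun e => v e - C e) hO₁ hO' hu hv₁ hdiff₁ hΦ₁)
    · -- circuit reversal step
      obtain ⟨C, hC, hCcomp, hCconf⟩ := lemC hTU hO hO' hu hv hdiff hu0
      obtain ⟨hCS, hC0, hCker, hCmin4⟩ := hC
      set O₁ : Fin m → ℤ := fun e => O e - 2 * C e with hO₁def
      have hO₁ : IsOrientation O₁ := by
        intro e
        have hr : O₁ e = O e - 2 * C e := rfl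
        by_cases h : C e = 0
        · rcases hO e with h3 | h3 <;> omega
        · have h2 := hCcomp e h
          rcases hO e with h3 | h3 <;> omega
      have hrev : CCReversal A O O₁ := by
        refine ⟨C, Or.inl ⟨hCS, hC0, hCker, hCmin4⟩, fun e he => (hCcomp e he).symm, ?_, ?_⟩
        · intro e he
          have hr : O₁ e = O e - 2 * C e := rfl
          have h2 := hCcomp e he
          omega
        · intro e he
          have hr : O₁ e = O e - 2 * C e := rfl
          omega
      have hu₁ : A.mulVec (fun e => u e - C e) = 0 := by
        have h1 : (fun e => u e - C e) = u - C := rfl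
        rw [h1, Matrix.mulVec_sub, hu, hCker, sub_zero]
      have hdiff₁ : ∀ e, O₁ e - O' e = 2 * ((u e - C e) + v e) := by
        intro e
        have hr : O₁ e = O e - 2 * C e := rfl
        have h4 := hdiff e
        omega
      have hdec : (∑ e, ((u e - C e) ^ 2 + v e ^ 2)) < ∑ e, (u e ^ 2 + v e ^ 2) := by
        apply Finset.sum_lt_sum
        · intro e _
          by_cases h : C e = 0
          · rw [h]; ring_nf; rfl
          · have h1 := hCconf e h
            rcases hCS e with h3 | h3 | h3
            · nlinarith
            · exact absurd h3 h
            · nlinarith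
        · obtain ⟨e0, he0⟩ := Function.ne_iff.1 hC0
          refine ⟨e0, Finset.mem_univ e0, ?_⟩
          have he0' : C e0 ≠ 0 := by simpa using he0
          have h1 := hCconf e0 he0'
          rcases hCS e0 with h3 | h3 | h3
          · nlinarith
          · exact absurd h3 he0'
          · nlinarith
      have hΦ₁ : (∑ e, ((u e - C e) ^ 2 + v e ^ 2)) ≤ (n : ℤ) := by
        have h5 := Int.lt_iff_add_one_le.1 hdec
        push_cast at hΦ
        linarith
      exact Relation.EqvGen.trans _ _ _ (Relation.EqvGen.rel _ _ hrev)
        (IH O₁ O' (fun e => u e - C e) v hO₁ hO' hu₁ hv hdiff₁ hΦ₁)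

/-- Forward direction. -/
lemma diff_of_equiv {r m : ℕ} {A : Matrix (Fin r) (Fin m) ℤ} {O O' : Fin m → ℤ}
    (h : CCEquiv A O O') :
    ∃ u v : Fin m → ℤ, A.mulVec u = 0 ∧ (∃ y : Fin r → ℤ, v = Matrix.vecMul y A) ∧
      ∀ e, O e - O' e = 2 * (u e + v e) := by
  induction h with
  | rel a b hab =>
    obtain ⟨C, hC, hcomp, hflip, hfix⟩ := hab
    rcases hC with hc | hc
    · refine ⟨C, 0, hc.2.2.1, ⟨0, by rw [Matrix.zero_vecMul]⟩, ?_⟩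
      intro e
      show a e - b e = 2 * (C e + 0)
      by_cases h : C e = 0
      · rw [hfix e h, h]
        ring
      · rw [hflip e h, ← hcomp e h]
        ring
    · refine ⟨0, C, Matrix.mulVec_zero A, hc.2.2.1, ?_⟩
      intro e
      show a e - b e = 2 * (0 + C e)
      by_cases h : C e = 0
      · rw [hfix e h, h]
        ring
      · rw [hflip e h, ← hcomp e h]
        ring
  | refl a =>
    exact ⟨0, 0, Matrix.mulVec_zero A, ⟨0, by rw [Matrix.zero_vecMul]⟩, fun e => by
      show a e - a e = 2 * (0 + 0)
      ring⟩
  | symm a b _ ih =>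
    obtain ⟨u, v, h1, ⟨y, hy⟩, h3⟩ := ih
    refine ⟨-u, -v, by rw [Matrix.mulVec_neg, h1, neg_zero], ⟨-y, by rw [hy, Matrix.neg_vecMul]⟩, ?_⟩
    intro e
    have h4 := h3 e
    show b e - a e = 2 * (-(u e) + -(v e))
    omega
  | trans a b c _ _ ih1 ih2 =>
    obtain ⟨u1, v1, h1, ⟨y1, hy1⟩, h3⟩ := ih1
    obtain ⟨u2, v2, h4, ⟨y2, hy2⟩, h6⟩ := ih2
    refine ⟨u1 + u2, v1 + v2, by rw [Matrix.mulVec_add, h1, h4, add_zero],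
      ⟨y1 + y2, by rw [Matrix.add_vecMul, ← hy1, ← hy2]⟩, ?_⟩
    intro e
    have h7 := h3 e
    have h8 := h6 e
    show a e - c e = 2 * ((u1 e + u2 e) + (v1 e + v2 e))
    omega

/-- Surjectivity. -/
lemma surj {r m : ℕ} {A : Matrix (Fin r) (Fin m) ℤ} (hTU : A.IsTotallyUnimodular)
    (O₀ : Fin m → ℤ) (hO₀ : IsOrientation O₀) :
    ∀ (k : ℕ) (γ : Fin m → ℤ), (∑ e, (γ e).natAbs) ≤ k →
    ∃ O, IsOrientation O ∧ ∃ u v : Fin m → ℤ, A.mulVec u = 0 ∧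
      (∃ y : Fin r → ℤ, v = Matrix.vecMul y A) ∧
      ∀ e, O e - O₀ e = 2 * (γ e + u e + v e) := by
  intro k
  induction k with
  | zero =>
    intro γ hγ
    have hγ0 : ∀ e, γ e = 0 := by
      intro e
      have h1 : (γ e).natAbs ≤ ∑ f, (γ f).natAbs :=
        Finset.single_le_sum (f := fun e => (γ e).natAbs)
          (fun f _ => Nat.zero_le _) (Finset.mem_univ e)
      omega
    exact ⟨O₀, hO₀, 0, 0, Matrix.mulVec_zero A, ⟨0, by rw [Matrix.zero_vecMul]⟩, fun e => by
      show O₀ e - O₀ e = 2 * (γ e + 0 + 0)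
      rw [hγ0 e]
      ring⟩
  | succ k IH =>
    intro γ hγ
    by_cases hγ0 : γ = 0
    · subst hγ0
      refine ⟨O₀, hO₀, 0, 0, Matrix.mulVec_zero A, ⟨0, by rw [Matrix.zero_vecMul]⟩, fun e => by
        show O₀ e - O₀ e = 2 * ((0 : Fin m → ℤ) e + 0 + 0)
        show O₀ e - O₀ e = 2 * ((0 : ℤ) + 0 + 0)
        ring⟩
    · obtain ⟨i, hi⟩ := Function.ne_iff.1 hγ0
      have hi' : γ i ≠ 0 := by simpa using hi
      set s : ℤ := if 0 < γ i then 1 else -1 with hs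
      set γ' : Fin m → ℤ := Function.update γ i (γ i - s) with hγ'
      have h1 : ∀ e, e ≠ i → γ' e = γ e := fun e he => Function.update_of_ne he _ _
      have h2 : γ' i = γ i - s := Function.update_self _ _ _
      have hsum' : (∑ e, (γ' e).natAbs) ≤ k := by
        have h3 : (γ' i).natAbs + 1 = (γ i).natAbs := by
          rw [h2, hs]
          split_ifs with h <;> omega
        have h4 : ∑ e ∈ Finset.univ.erase i, (γ' e).natAbs
            = ∑ e ∈ Finset.univ.erase i, (γ e).natAbs :=
          Finset.sum_congr rfl (fun e he => by rw [h1 e (Finset.mem_erase.1 he).1])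
        have h5 : (∑ e ∈ Finset.univ.erase i, (γ' e).natAbs) + (γ' i).natAbs
            = ∑ e, (γ' e).natAbs :=
          Finset.sum_erase_add Finset.univ _ (Finset.mem_univ i)
        have h6 : (∑ e ∈ Finset.univ.erase i, (γ e).natAbs) + (γ i).natAbs
            = ∑ e, (γ e).natAbs :=
          Finset.sum_erase_add Finset.univ _ (Finset.mem_univ i)
        omega
      obtain ⟨O', hO', u', v', hu', hv', hdiff'⟩ := IH γ' hsum'
      have hss : s = 1 ∨ s = -1 := by
        rw [hs]
        split_ifs <;> simp
      by_cases hOi : O' i = -s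
      · refine ⟨Function.update O' i s, ?_, u', v', hu', hv', ?_⟩
        · intro e
          by_cases h : e = i
          · rw [h, Function.update_self]
            exact hss
          · rw [Function.update_of_ne h]
            exact hO' e
        · intro e
          by_cases h : e = i
          · subst h
            rw [Function.update_self]
            have h7 := hdiff' e
            rw [h2] at h7
            omega
          · rw [Function.update_of_ne h]
            have h7 := hdiff' e
            rw [h1 e h] at h7
            exact h7
      · have hOis : O' i = s := by
          rcases hO' i with h | h <;> rcases hss with h8 | h8 <;> omega
        obtain ⟨C, hCor, hCcomp, hCi⟩ := minty hTU hO' i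
        set O'' : Fin m → ℤ := fun e => O' e - 2 * C e with hO''def
        have hO''or : IsOrientation O'' := by
          intro e
          have hr : O'' e = O' e - 2 * C e := rfl
          by_cases h : C e = 0
          · rcases hO' e with h3 | h3 <;> omega
          · have h2' := hCcomp e h
            rcases hO' e with h3 | h3 <;> omega
        have hCio : C i = s := by
          rw [← hOis]
          exact hCcomp i hCi
        have hOor : IsOrientation (Function.update O'' i s) := by
          intro e
          by_cases h : e = i
          · rw [h, Function.update_self]
            exact hss
          · rw [Function.update_of_ne h]
            exact hO''or e
        rcases hCor with hc | hc
        · refine ⟨Function.update O'' i s, hOor, (fun e => u' e - C e), v', ?_, hv', ?_⟩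
          · have h9 : (fun e => u' e - C e) = u' - C := rfl
            rw [h9, Matrix.mulVec_sub, hu', hc.2.2.1, sub_zero]
          · intro e
            by_cases h : e = i
            · subst h
              rw [Function.update_self]
              have h7 := hdiff' e
              rw [h2] at h7
              have hb : (fun e => u' e - C e) e = u' e - C e := rfl
              omega
            · rw [Function.update_of_ne h]
              have h7 := hdiff' e
              rw [h1 e h] at h7
              have hr : O'' e = O' e - 2 * C e := rfl
              have hb : (fun e => u' e - C e) e = u' e - C e := rfl
              omega
        · obtain ⟨y', hy'⟩ := hv'
          obtain ⟨yC, hyC⟩ := hc.2.2.1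
          refine ⟨Function.update O'' i s, hOor, u', (fun e => v' e - C e), hu',
            ⟨y' - yC, ?_⟩, ?_⟩
          · funext e
            rw [Matrix.sub_vecMul]
            show v' e - C e = Matrix.vecMul y' A e - Matrix.vecMul yC A e
            rw [← hy', ← hyC]
          · intro e
            by_cases h : e = i
            · subst h
              rw [Function.update_self]
              have h7 := hdiff' e
              rw [h2] at h7
              have hb : (fun e => v' e - C e) e = v' e - C e := rfl
              omega
            · rw [Function.update_of_ne h]
              have h7 := hdiff' e
              rw [h1 e h] at h7
              have hr : O'' e = O' e - 2 * C e := rfl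
              have hb : (fun e => v' e - C e) e = v' e - C e := rfl
              omega

end BBY
end P10

open BBY

/-- Orientations `O`, `O'` are circuit–cocircuit-reversal equivalent iff
`(O - O')/2 ∈ Λ_A + Λ*_A`; moreover every `γ ∈ ℤ^E` is of the form `(O - O₀)/2` modulo
`Λ_A + Λ*_A`.  Hence the circuit–cocircuit reversal classes form a torsor under
`Jac(M) = ℤ^E/(Λ_A + Λ*_A)`. -/
theorem stmt0 {r m : ℕ} (A : Matrix (Fin r) (Fin m) ℤ)
    (hTU : A.IsTotallyUnimodular) (hrank : (A.map ((↑) : ℤ → ℝ)).rank = r)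
    (O₀ : Fin m → ℤ) (hO₀ : IsOrientation O₀) :
    (∀ O O' : Fin m → ℤ, IsOrientation O → IsOrientation O' →
      (CCEquiv A O O' ↔ ∃ u v : Fin m → ℤ, A.mulVec u = 0 ∧
        (∃ y : Fin r → ℤ, v = Matrix.vecMul y A) ∧
        ∀ e, O e - O' e = 2 * (u e + v e))) ∧
    (∀ γ : Fin m → ℤ, ∃ O : Fin m → ℤ, IsOrientation O ∧
      ∃ u v : Fin m → ℤ, A.mulVec u = 0 ∧ (∃ y : Fin r → ℤ, v = Matrix.vecMul y A) ∧
        ∀ e, O e - O₀ e = 2 * (γ e + u e + v e)) := by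
  constructor
  · intro O O' hO hO'
    constructor
    · exact fun h => diff_of_equiv h
    · rintro ⟨u, v, hu, hv, hdiff⟩
      exact main_equiv hTU (∑ e, (u e ^ 2 + v e ^ 2)).toNat O O' u v hO hO' hu hv hdiff
        (Int.self_le_toNat _)
  · intro γ
    exact surj hTU O₀ hO₀ (∑ e, (γ e).natAbs) γ le_rfl
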